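/- arXiv:2405.13886 — 5 statements merged into one kernel-verified Lean document; each statement's English description precedes it below -/
import Mathlib

section
/- (Trade-off bound, averaged form) Let τ_β = e^{-βH}/Z on H_B, let {p_x} be a probability distribution and {ρ_x} density matrices on H_B with Σ_x p_x ρ_x = τ_β, and let {U_x} be arbitrary unitaries with extracted energies E_x = Tr(H(ρ_x - U_x ρ_x U_x†)). Then Σ_x p_x (S(ρ_x) + β E_x) ≤ S(τ_β). -/
open Matrix BigOperators Finset
open scoped Kronecker ComplexOrder

noncomputable section

variable {n : Type*} [Fintype n] [DecidableEq n]

/-- Functional calculus for Hermitian matrices (junk value `0` otherwise). -/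
def matFun (f : ℝ → ℝ) (A : Matrix n n ℂ) : Matrix n n ℂ :=
  if hA : A.IsHermitian then
    (hA.eigenvectorUnitary : Matrix n n ℂ) *
      Matrix.diagonal (fun i => (f (hA.eigenvalues i) : ℂ)) *
      star (hA.eigenvectorUnitary : Matrix n n ℂ)
  else 0

/-- Von Neumann entropy (natural log). -/
def vnEntropy (A : Matrix n n ℂ) : ℝ :=
  if hA : A.IsHermitian then ∑ i, Real.negMulLog (hA.eigenvalues i) else 0

/-- Umegaki relative entropy `Tr ρ (log ρ - log σ)`. -/
def relEnt (ρ σ : Matrix n n ℂ) : ℝ :=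
  ((ρ * (matFun Real.log ρ - matFun Real.log σ)).trace).re

/-- Partition function `Z = Tr e^{-βH}`. -/
def gibbsZ (β : ℝ) (H : Matrix n n ℂ) : ℝ :=
  ((matFun (fun x => Real.exp (-(β * x))) H).trace).re

/-- Gibbs (thermal) state `e^{-βH}/Z`. -/
def gibbs (β : ℝ) (H : Matrix n n ℂ) : Matrix n n ℂ :=
  ((gibbsZ β H : ℂ)⁻¹) • matFun (fun x => Real.exp (-(β * x))) H

/-- Density matrix predicate. -/
def IsDensity (ρ : Matrix n n ℂ) : Prop := ρ.PosSemidef ∧ ρ.trace = 1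

def IsUnitaryMat (U : Matrix n n ℂ) : Prop := U ∈ Matrix.unitaryGroup n ℂ

/-- Outer product `|v⟩⟨v|`. -/
def outer {m : Type*} (v : m → ℂ) : Matrix m m ℂ :=
  Matrix.of fun i j => v i * (starRingEnd ℂ) (v j)

/-- Unnormalized maximally entangled vector `∑ₓ |x⟩|x⟩`. -/
def maxEnt (d : ℕ) : Fin d × Fin d → ℂ := fun p => if p.1 = p.2 then 1 else 0

/-- Positive square root of a Hermitian matrix (via eigenvalues). -/
def matSqrt (A : Matrix n n ℂ) : Matrix n n ℂ := matFun Real.sqrt A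

/-- Partial trace over the first tensor factor. -/
def ptraceFst {m k : Type*} [Fintype m] (ρ : Matrix (m × k) (m × k) ℂ) : Matrix k k ℂ :=
  Matrix.of fun j1 j2 => ∑ i, ρ (i, j1) (i, j2)

/-- Partial trace over the second tensor factor. -/
def ptraceSnd {m k : Type*} [Fintype k] (ρ : Matrix (m × k) (m × k) ℂ) : Matrix m m ℂ :=
  Matrix.of fun i1 i2 => ∑ j, ρ (i1, j) (i2, j)

/-! ### Auxiliary lemmas -/

section Aux

lemma trace_diag_conj (V : Matrix n n ℂ) (d : n → ℂ) (B : Matrix n n ℂ) :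
    (B * (V * Matrix.diagonal d * star V)).trace = ∑ i, d i * (star V * B * V) i i := by
  have e1 : B * (V * Matrix.diagonal d * star V) = (B * V) * Matrix.diagonal d * star V := by
    noncomm_ring
  rw [e1, Matrix.trace_mul_cycle, ← mul_assoc, Matrix.trace_mul_comm]
  simp [Matrix.trace, Matrix.diagonal_mul, Matrix.diag, mul_assoc]

open Polynomial in
lemma charpoly_unitary_conj (V : Matrix n n ℂ) (hV : V ∈ Matrix.unitaryGroup n ℂ)
    (D : Matrix n n ℂ) : (V * D * star V).charpoly = D.charpoly := by
  have h2 : V * star V = 1 := (Matrix.mem_unitaryGroup_iff (A := V)).mp hV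
  have hcom : Commute ((Matrix.scalar n) (X : ℂ[X])) ((C : ℂ →+* ℂ[X]).mapMatrix V) :=
    (Matrix.scalar_commute _ (fun r => Commute.all _ _) _)
  have hm : ((C : ℂ →+* ℂ[X]).mapMatrix V) * ((C : ℂ →+* ℂ[X]).mapMatrix (star V)) = 1 := by
    rw [← RingHom.map_mul, h2, RingHom.map_one]
  unfold Matrix.charpoly
  have key : charmatrix (V * D * star V) =
      (C : ℂ →+* ℂ[X]).mapMatrix V * charmatrix D * (C : ℂ →+* ℂ[X]).mapMatrix (star V) := by
    unfold charmatrix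
    rw [mul_sub, sub_mul]
    congr 1
    · rw [← hcom.eq, mul_assoc, hm, mul_one]
    · rw [← RingHom.map_mul, ← RingHom.map_mul]
  rw [key, Matrix.det_mul, Matrix.det_mul]
  have hd : ((C : ℂ →+* ℂ[X]).mapMatrix V).det * ((C : ℂ →+* ℂ[X]).mapMatrix (star V)).det = 1 := by
    rw [← Matrix.det_mul, hm, Matrix.det_one]
  linear_combination D.charmatrix.det * hd

open Polynomial in
lemma charpoly_diagonal' (d : n → ℂ) :
    (Matrix.diagonal d).charpoly = ∏ i, (X - C (d i)) := by
  unfold Matrix.charpoly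
  have : charmatrix (Matrix.diagonal d) = Matrix.diagonal (fun i => X - C (d i)) := by
    ext i j
    by_cases h : i = j
    · subst h; simp
    · simp [h, Matrix.diagonal_apply_ne _ h]
  rw [this, Matrix.det_diagonal]

open Polynomial in
/-- If a Hermitian matrix is unitarily conjugate to a real diagonal matrix, then any
function summed over its (Mathlib) eigenvalues equals the sum over the diagonal entries. -/
lemma sum_comp_eigenvalues {A : Matrix n n ℂ} (hA : A.IsHermitian)
    (V : Matrix n n ℂ) (hV : V ∈ Matrix.unitaryGroup n ℂ) (c : n → ℝ)
    (hAe : A = V * Matrix.diagonal (fun i => (c i : ℂ)) * star V) (g : ℝ → ℝ) :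
    ∑ i, g (hA.eigenvalues i) = ∑ i, g (c i) := by
  have h1 : A.charpoly = ∏ i, (X - C ((c i : ℂ))) := by
    conv_lhs => rw [hAe]
    rw [charpoly_unitary_conj V hV, charpoly_diagonal']
  have h2 : A.charpoly = ∏ i, (X - C ((hA.eigenvalues i : ℂ))) := by
    conv_lhs => rw [hA.spectral_theorem, Unitary.conjStarAlgAut_apply]
    rw [charpoly_unitary_conj _ (SetLike.coe_mem _),
      show Matrix.diagonal (RCLike.ofReal ∘ hA.eigenvalues)
        = Matrix.diagonal (fun i => ((hA.eigenvalues i : ℝ) : ℂ)) from rfl,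
      charpoly_diagonal']
  have h : ∏ i, (X - C ((hA.eigenvalues i : ℂ))) = ∏ i, (X - C ((c i : ℂ))) := h2.symm.trans h1
  have h1' : (Multiset.map (fun i => ((hA.eigenvalues i : ℂ))) Finset.univ.val) =
      (Multiset.map (fun i => ((c i : ℂ))) Finset.univ.val) := by
    have e : ∀ (f : n → ℂ), ∏ i, (X - C (f i)) =
        ((Multiset.map f Finset.univ.val).map (fun a => X - C a)).prod := by
      intro f
      rw [Multiset.map_map]
      rfl
    rw [e, e] at h
    have := congrArg Polynomial.roots h
    rwa [Polynomial.roots_multiset_prod_X_sub_C, Polynomial.roots_multiset_prod_X_sub_C] at this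
  have h2' : Multiset.map hA.eigenvalues Finset.univ.val = Multiset.map c Finset.univ.val := by
    apply Multiset.map_injective (f := (fun x : ℝ => (x : ℂ))) Complex.ofReal_injective
    rwa [Multiset.map_map, Multiset.map_map]
  calc ∑ i, g (hA.eigenvalues i)
      = (Multiset.map g (Multiset.map hA.eigenvalues Finset.univ.val)).sum := by
        rw [Multiset.map_map]; rfl
    _ = (Multiset.map g (Multiset.map c Finset.univ.val)).sum := by rw [h2']
    _ = ∑ i, g (c i) := by rw [Multiset.map_map]; rfl

/-- Gibbs variational principle for classical probability vectors. -/
lemma classical_gibbs [Nonempty n] (q h : n → ℝ) (hq0 : ∀ i, 0 ≤ q i) (hq1 : ∑ i, q i = 1)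
    (β : ℝ) :
    ∑ i, (Real.negMulLog (q i) - β * (q i * h i)) ≤ Real.log (∑ i, Real.exp (-(β * h i))) := by
  set Z' : ℝ := ∑ i, Real.exp (-(β * h i)) with hZ'
  have hZpos : 0 < Z' := Finset.sum_pos (fun i _ => Real.exp_pos _) univ_nonempty
  have key : ∀ i, Real.negMulLog (q i) - β * (q i * h i) - q i * Real.log Z'
      ≤ Real.exp (-(β * h i)) / Z' - q i := by
    intro i
    rcases eq_or_lt_of_le (hq0 i) with h0 | h0
    · rw [← h0]
      simp [Real.negMulLog_zero]
      positivity
    · have hlog := Real.log_le_sub_one_of_pos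
        (show 0 < Real.exp (-(β * h i)) / (Z' * q i) by positivity)
      have hexp : Real.log (Real.exp (-(β * h i)) / (Z' * q i))
          = -(β * h i) - Real.log Z' - Real.log (q i) := by
        rw [Real.log_div (Real.exp_ne_zero _) (by positivity), Real.log_exp,
          Real.log_mul (ne_of_gt hZpos) (ne_of_gt h0)]
        ring
      rw [hexp] at hlog
      have hmul := mul_le_mul_of_nonneg_left hlog (le_of_lt h0)
      have hq : q i * (Real.exp (-(β * h i)) / (Z' * q i) - 1)
          = Real.exp (-(β * h i)) / Z' - q i := by
        field_simp
      rw [hq] at hmul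
      rw [Real.negMulLog]
      nlinarith [hmul]
  have hs := Finset.sum_le_sum (s := univ) (fun i _ => key i)
  rw [Finset.sum_sub_distrib (f := fun i => Real.exp (-(β * h i)) / Z'),
    ← Finset.sum_div, ← hZ', div_self (ne_of_gt hZpos), hq1] at hs
  rw [Finset.sum_sub_distrib] at hs ⊢
  rw [← Finset.sum_mul, hq1, Finset.sum_sub_distrib] at hs
  linarith

omit [DecidableEq n] in
/-- Jensen's inequality for the exponential. -/
lemma jensen_exp (w x : n → ℝ) (hw0 : ∀ i, 0 ≤ w i) (hw1 : ∑ i, w i = 1) :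
    Real.exp (∑ i, w i * x i) ≤ ∑ i, w i * Real.exp (x i) := by
  have := convexOn_exp.map_sum_le (t := univ) (w := w) (p := x)
    (fun i _ => hw0 i) hw1 (fun i _ => Set.mem_univ _)
  simpa [smul_eq_mul] using this

lemma diag_entry_conj (P : Matrix n n ℂ) (lam : n → ℝ) (i : n) :
    ((star P * Matrix.diagonal (fun j => ((lam j : ℝ) : ℂ)) * P) i i)
      = ((∑ j, lam j * Complex.normSq (P j i) : ℝ) : ℂ) := by
  rw [Matrix.mul_apply, Complex.ofReal_sum]
  apply Finset.sum_congr rfl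
  intro j _
  rw [Matrix.mul_diagonal, Matrix.star_apply]
  push_cast
  rw [Complex.star_def]
  linear_combination (lam j : ℂ) * Complex.mul_conj (P j i)

lemma unitary_col_sum (P : Matrix n n ℂ) (hP : P ∈ Matrix.unitaryGroup n ℂ) (i : n) :
    ∑ j, Complex.normSq (P j i) = 1 := by
  have h1 : star P * P = 1 := (Matrix.mem_unitaryGroup_iff' (A := P)).mp hP
  have e : (star P * P) i i = (1 : Matrix n n ℂ) i i := by rw [h1]
  rw [Matrix.mul_apply, Matrix.one_apply_eq] at e
  have e2 : ∑ j, ((Complex.normSq (P j i) : ℝ) : ℂ) = 1 := by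
    rw [← e]
    apply Finset.sum_congr rfl
    intro j _
    rw [Matrix.star_apply, Complex.star_def, mul_comm, Complex.mul_conj]
  rw [← Complex.ofReal_sum] at e2
  exact_mod_cast e2

lemma unitary_row_sum (P : Matrix n n ℂ) (hP : P ∈ Matrix.unitaryGroup n ℂ) (j : n) :
    ∑ i, Complex.normSq (P j i) = 1 := by
  have h1 : P * star P = 1 := (Matrix.mem_unitaryGroup_iff (A := P)).mp hP
  have e : (P * star P) j j = (1 : Matrix n n ℂ) j j := by rw [h1]
  rw [Matrix.mul_apply, Matrix.one_apply_eq] at e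
  have e2 : ∑ i, ((Complex.normSq (P j i) : ℝ) : ℂ) = 1 := by
    rw [← e]
    apply Finset.sum_congr rfl
    intro i _
    rw [Matrix.star_apply, Complex.star_def, Complex.mul_conj]
  rw [← Complex.ofReal_sum] at e2
  exact_mod_cast e2

/-- Trace of a Hermitian matrix equals the sum of its eigenvalues. -/
lemma trace_eq_sum_eigs {A : Matrix n n ℂ} (hA : A.IsHermitian) :
    A.trace = ∑ i, ((hA.eigenvalues i : ℝ) : ℂ) := by
  conv_lhs => rw [hA.spectral_theorem, Unitary.conjStarAlgAut_apply]
  rw [Matrix.trace_mul_cycle]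
  have h1 : star ((hA.eigenvectorUnitary : Matrix n n ℂ))
      * (hA.eigenvectorUnitary : Matrix n n ℂ) = 1 :=
    (Matrix.mem_unitaryGroup_iff' (A := _)).mp (SetLike.coe_mem _)
  rw [h1, one_mul, Matrix.trace_diagonal]
  rfl

/-- Key per-state inequality: `S(ρ) - β Tr(H UρU†) ≤ log Z`. -/
lemma per_state (H : Matrix n n ℂ) (hH : H.IsHermitian) (β : ℝ)
    (ρ Q : Matrix n n ℂ) (hρ : IsDensity ρ) (hQ : Q ∈ Matrix.unitaryGroup n ℂ) :
    vnEntropy ρ - β * ((H * (Q * ρ * star Q)).trace).re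
      ≤ Real.log (∑ j, Real.exp (-(β * hH.eigenvalues j))) := by
  have hne : Nonempty n := by
    by_contra hc
    rw [not_nonempty_iff] at hc
    have : ρ.trace = 0 := by simp [Matrix.trace]
    rw [hρ.2] at this
    exact one_ne_zero this
  have hrh : ρ.IsHermitian := hρ.1.1
  set q : n → ℝ := hrh.eigenvalues with hqdef
  have hq0 : ∀ i, 0 ≤ q i := fun i => hρ.1.eigenvalues_nonneg i
  have hq1 : ∑ i, q i = 1 := by
    have := trace_eq_sum_eigs hrh
    rw [hρ.2, ← Complex.ofReal_sum] at this
    exact_mod_cast this.symm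
  set Vρ : Matrix n n ℂ := (hrh.eigenvectorUnitary : Matrix n n ℂ) with hVρ
  set W : Matrix n n ℂ := Q * Vρ with hWdef
  have hW : W ∈ Matrix.unitaryGroup n ℂ := mul_mem hQ (SetLike.coe_mem _)
  set Vh : Matrix n n ℂ := (hH.eigenvectorUnitary : Matrix n n ℂ) with hVh
  set P : Matrix n n ℂ := star Vh * W with hPdef
  have hP : P ∈ Matrix.unitaryGroup n ℂ :=
    mul_mem (Unitary.star_mem (SetLike.coe_mem _)) hW
  set lam : n → ℝ := hH.eigenvalues with hlam
  set h : n → ℝ := fun i => ∑ j, lam j * Complex.normSq (P j i) with hdef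
  -- the conjugated state
  have hσ : Q * ρ * star Q = W * Matrix.diagonal (fun i => ((q i : ℝ) : ℂ)) * star W := by
    conv_lhs => rw [hrh.spectral_theorem, Unitary.conjStarAlgAut_apply]
    rw [hWdef, StarMul.star_mul]
    noncomm_ring
  have hWHW : star W * H * W = star P * Matrix.diagonal (fun j => ((lam j : ℝ) : ℂ)) * P := by
    have hsP : star P = star W * Vh := by rw [hPdef, StarMul.star_mul, star_star]
    conv_lhs => rw [hH.spectral_theorem, Unitary.conjStarAlgAut_apply]
    rw [hsP, hPdef]
    noncomm_ring
  have htr : ((H * (Q * ρ * star Q)).trace).re = ∑ i, q i * h i := by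
    rw [hσ, trace_diag_conj, Complex.re_sum]
    apply Finset.sum_congr rfl
    intro i _
    rw [hWHW, diag_entry_conj P lam i, ← Complex.ofReal_mul, Complex.ofReal_re]
  -- Jensen / Peierls step
  have hpeierls : ∑ i, Real.exp (-(β * h i)) ≤ ∑ j, Real.exp (-(β * lam j)) := by
    have hstep : ∀ i, Real.exp (-(β * h i))
        ≤ ∑ j, Complex.normSq (P j i) * Real.exp (-(β * lam j)) := by
      intro i
      have e : -(β * h i) = ∑ j, Complex.normSq (P j i) * (-(β * lam j)) := by
        rw [hdef]
        simp only [Finset.mul_sum, ← Finset.sum_neg_distrib]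
        apply Finset.sum_congr rfl
        intro j _
        ring
      rw [e]
      exact jensen_exp _ _ (fun j => Complex.normSq_nonneg _) (unitary_col_sum P hP i)
    calc ∑ i, Real.exp (-(β * h i))
        ≤ ∑ i, ∑ j, Complex.normSq (P j i) * Real.exp (-(β * lam j)) :=
          Finset.sum_le_sum (fun i _ => hstep i)
      _ = ∑ j, (∑ i, Complex.normSq (P j i)) * Real.exp (-(β * lam j)) := by
          rw [Finset.sum_comm]
          exact Finset.sum_congr rfl (fun j _ => by rw [Finset.sum_mul])
      _ = ∑ j, Real.exp (-(β * lam j)) := by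
          exact Finset.sum_congr rfl (fun j _ => by rw [unitary_row_sum P hP j, one_mul])
  have hZ'pos : 0 < ∑ i, Real.exp (-(β * h i)) :=
    Finset.sum_pos (fun i _ => Real.exp_pos _) univ_nonempty
  have hlog : Real.log (∑ i, Real.exp (-(β * h i)))
      ≤ Real.log (∑ j, Real.exp (-(β * lam j))) := Real.log_le_log hZ'pos hpeierls
  have hcg := classical_gibbs q h hq0 hq1 β
  have hvn : vnEntropy ρ = ∑ i, Real.negMulLog (q i) := by rw [vnEntropy, dif_pos hrh]
  rw [hvn, htr]
  rw [Finset.sum_sub_distrib, ← Finset.mul_sum] at hcg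
  linarith

end Aux

/-- averaged trade-off bound: any ensemble averaging to the
thermal state obeys `Σ_x p_x (S(ρ_x) + β E_x) ≤ S(τ_β)`. -/
theorem averaged_tradeoff_bound {d : ℕ} {ι : Type*} [Fintype ι]
    (H : Matrix (Fin d) (Fin d) ℂ) (hH : H.IsHermitian) (β : ℝ) (hβ : 0 < β)
    (p : ι → ℝ) (hp0 : ∀ x, 0 ≤ p x) (hp1 : ∑ x, p x = 1)
    (ρ : ι → Matrix (Fin d) (Fin d) ℂ) (hρ : ∀ x, IsDensity (ρ x))
    (U : ι → Matrix (Fin d) (Fin d) ℂ) (hU : ∀ x, IsUnitaryMat (U x))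
    (havg : ∑ x, (p x : ℂ) • ρ x = gibbs β H) :
    ∑ x, p x * (vnEntropy (ρ x)
        + β * ((H * (ρ x - U x * ρ x * star (U x))).trace).re)
      ≤ vnEntropy (gibbs β H) := by
  rcases Nat.eq_zero_or_pos d with hd | hd
  · -- degenerate case: the Hilbert space is zero-dimensional
    subst hd
    have hherm : ∀ (X : Matrix (Fin 0) (Fin 0) ℂ), X.IsHermitian := by
      intro X
      ext i j
      exact i.elim0
    have htr0 : ∀ (X : Matrix (Fin 0) (Fin 0) ℂ), X.trace = 0 := by
      intro X; simp [Matrix.trace]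
    have hvn0 : ∀ (X : Matrix (Fin 0) (Fin 0) ℂ), vnEntropy X = 0 := by
      intro X; rw [vnEntropy, dif_pos (hherm X)]; simp
    rw [hvn0]
    have : ∀ x : ι, p x * (vnEntropy (ρ x)
        + β * ((H * (ρ x - U x * ρ x * star (U x))).trace).re) = 0 := by
      intro x
      rw [hvn0, htr0]
      simp
    rw [Finset.sum_congr rfl (fun x _ => this x), Finset.sum_const_zero]
  · haveI : Nonempty (Fin d) := ⟨⟨0, hd⟩⟩
    set lam : Fin d → ℝ := hH.eigenvalues with hlam
    set V : Matrix (Fin d) (Fin d) ℂ := (hH.eigenvectorUnitary : Matrix (Fin d) (Fin d) ℂ)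
      with hV
    set Zs : ℝ := ∑ j, Real.exp (-(β * lam j)) with hZsdef
    have hZpos : 0 < Zs := Finset.sum_pos (fun i _ => Real.exp_pos _) univ_nonempty
    have hZs : gibbsZ β H = Zs := by
      rw [gibbsZ, matFun, dif_pos hH, Matrix.trace_mul_cycle]
      have h1 : star V * V = 1 :=
        (Matrix.mem_unitaryGroup_iff' (A := V)).mp (SetLike.coe_mem _)
      rw [← hV, h1, one_mul, Matrix.trace_diagonal, ← Complex.ofReal_sum,
        Complex.ofReal_re]
    set t : Fin d → ℝ := fun j => Real.exp (-(β * lam j)) / Zs with htdef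
    have ht1 : ∑ j, t j = 1 := by
      rw [htdef, ← Finset.sum_div, ← hZsdef, div_self (ne_of_gt hZpos)]
    have hGdec : gibbs β H = V * Matrix.diagonal (fun j => ((t j : ℝ) : ℂ)) * star V := by
      rw [gibbs, matFun, dif_pos hH, hZs, ← hV]
      have hfun : (fun j => ((t j : ℝ) : ℂ))
          = ((Zs : ℂ))⁻¹ • fun i => ((Real.exp (-(β * lam i)) : ℝ) : ℂ) := by
        funext j
        rw [Pi.smul_apply, smul_eq_mul, htdef]
        push_cast
        ring
      have hdiag : Matrix.diagonal (fun j => ((t j : ℝ) : ℂ))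
          = ((Zs : ℂ))⁻¹ • Matrix.diagonal (fun i => ((Real.exp (-(β * lam i)) : ℝ) : ℂ)) := by
        rw [hfun, Matrix.diagonal_smul]
      rw [hdiag, mul_smul_comm, Matrix.smul_mul]
    have hG : (gibbs β H).IsHermitian := by
      rw [hGdec, Matrix.star_eq_conjTranspose]
      exact Matrix.isHermitian_mul_mul_conjTranspose V
        (Matrix.isHermitian_diagonal_of_self_adjoint _
          (by funext j; exact Complex.conj_ofReal _))
    have hEnt : vnEntropy (gibbs β H) = ∑ j, Real.negMulLog (t j) := by
      rw [vnEntropy, dif_pos hG]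
      exact sum_comp_eigenvalues hG V (SetLike.coe_mem _) t hGdec Real.negMulLog
    have hTrG : ((H * gibbs β H).trace).re = ∑ j, t j * lam j := by
      rw [hGdec, trace_diag_conj, Complex.re_sum]
      have hdiagH : star V * H * V = Matrix.diagonal (fun i => ((lam i : ℝ) : ℂ)) := by
        rw [hV]
        have := hH.conjStarAlgAut_star_eigenvectorUnitary
        rw [Unitary.conjStarAlgAut_apply, Unitary.coe_star, star_star] at this
        exact this
      apply Finset.sum_congr rfl
      intro j _
      rw [hdiagH, Matrix.diagonal_apply_eq, ← Complex.ofReal_mul, Complex.ofReal_re]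
    -- average energy
    have hsum_a : ∑ x, p x * ((H * ρ x).trace).re = ((H * gibbs β H).trace).re := by
      have e1 : H * gibbs β H = ∑ x, (p x : ℂ) • (H * ρ x) := by
        rw [← havg, Finset.mul_sum]
        exact Finset.sum_congr rfl (fun x _ => by rw [mul_smul_comm])
      rw [e1, Matrix.trace_sum, Complex.re_sum]
      apply (Finset.sum_congr rfl (fun x _ => ?_)).symm
      rw [Matrix.trace_smul, smul_eq_mul, Complex.re_ofReal_mul]
    -- entropy of the Gibbs state
    have hfinal : Real.log Zs + β * (∑ j, t j * lam j) = ∑ j, Real.negMulLog (t j) := by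
      have e : ∀ j, Real.negMulLog (t j) = β * (t j * lam j) + t j * Real.log Zs := by
        intro j
        rw [Real.negMulLog, htdef, Real.log_div (Real.exp_ne_zero _) (ne_of_gt hZpos),
          Real.log_exp]
        ring
      rw [Finset.sum_congr rfl (fun j _ => e j), Finset.sum_add_distrib, ← Finset.mul_sum,
        ← Finset.sum_mul, ht1, one_mul]
      ring
    -- main chain
    have hchain : ∀ x : ι, p x * (vnEntropy (ρ x)
        + β * ((H * (ρ x - U x * ρ x * star (U x))).trace).re)
        = p x * (vnEntropy (ρ x) - β * ((H * (U x * ρ x * star (U x))).trace).re)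
          + β * (p x * ((H * ρ x).trace).re) := by
      intro x
      rw [mul_sub, Matrix.trace_sub, Complex.sub_re]
      ring
    rw [Finset.sum_congr rfl (fun x _ => hchain x), Finset.sum_add_distrib, ← Finset.mul_sum,
      hsum_a, hTrG]
    have hbound : ∑ x, p x * (vnEntropy (ρ x)
        - β * ((H * (U x * ρ x * star (U x))).trace).re) ≤ Real.log Zs := by
      calc ∑ x, p x * (vnEntropy (ρ x) - β * ((H * (U x * ρ x * star (U x))).trace).re)
          ≤ ∑ x, p x * Real.log Zs := by
            apply Finset.sum_le_sum
            intro x _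
            exact mul_le_mul_of_nonneg_left (per_state H hH β (ρ x) (U x) (hρ x) (hU x)) (hp0 x)
        _ = Real.log Zs := by rw [← Finset.sum_mul, hp1, one_mul]
    rw [hEnt, ← hfinal]
    linarith

end
end

section
/- (Theorem 1) Let |τ_β⟩_{AB} = Z^{-1/2} Σ_x e^{-βE_x/2}|E_x⟩_A|E_x⟩_B be the thermal field double state for Hamiltonian H on B, and |Φ⟩_{A'R} a maximally entangled state. For any teleportation protocol consisting of a rank-one projective measurement {Π_x} on AA' followed by conditional unitaries {U_x} on B, the average teleported entanglement entropy S(B) := Σ_x p_x S(ρ_x) and average extracted energy E := Σ_x p_x Tr(H(ρ_x - U_x ρ_x U_x†)) satisfy S(B) + βE ≤ S(τ_β), where ρ_x is Bob's post-measurement state with outcome x occurring with probability p_x, and τ_β = e^{-βH}/Z. -/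
open Matrix BigOperators Finset
open scoped Kronecker ComplexOrder

noncomputable section

variable {n : Type*} [Fintype n] [DecidableEq n]

/-! ### Auxiliary lemmas -/

section AuxLemmas

open Polynomial

/-- Classical Gibbs inequality. -/
lemma gibbs_ineq {ι : Type*} [Fintype ι] (lam mu : ι → ℝ)
    (hl : ∀ j, 0 ≤ lam j) (hm : ∀ j, 0 < mu j) (hsum : ∑ j, lam j = ∑ j, mu j) :
    ∑ j, Real.negMulLog (lam j) ≤ -∑ j, lam j * Real.log (mu j) := by
  have key : ∀ j, Real.negMulLog (lam j) ≤ -(lam j * Real.log (mu j)) + (mu j - lam j) := by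
    intro j
    rcases eq_or_lt_of_le (hl j) with h0 | h0
    · simp [← h0, Real.negMulLog, (hm j).le]
    · have hlog := Real.log_le_sub_one_of_pos (div_pos (hm j) h0)
      rw [Real.log_div (hm j).ne' h0.ne'] at hlog
      have h2 : lam j * (Real.log (mu j) - Real.log (lam j)) ≤ mu j - lam j := by
        have := mul_le_mul_of_nonneg_left hlog (hl j)
        calc lam j * (Real.log (mu j) - Real.log (lam j)) ≤ lam j * (mu j / lam j - 1) := this
          _ = mu j - lam j := by field_simp
      rw [Real.negMulLog]; nlinarith
  calc ∑ j, Real.negMulLog (lam j) ≤ ∑ j, (-(lam j * Real.log (mu j)) + (mu j - lam j)) :=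
        Finset.sum_le_sum fun j _ => key j
    _ = -∑ j, lam j * Real.log (mu j) := by
        rw [Finset.sum_add_distrib, Finset.sum_neg_distrib, Finset.sum_sub_distrib]
        rw [hsum]; ring

/-- Klein-type bound via doubly stochastic mixing. -/
lemma klein_bound {lam q : n → ℝ} {W : Matrix n n ℂ}
    (hW : W ∈ Matrix.unitaryGroup n ℂ)
    (hl : ∀ j, 0 ≤ lam j) (hls : ∑ j, lam j = 1)
    (hq : ∀ i, 0 < q i) (hqs : ∑ i, q i = 1) :
    ∑ j, Real.negMulLog (lam j) ≤
      ∑ i, (∑ j, lam j * Complex.normSq (W i j)) * (-Real.log (q i)) := by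
  set D : n → n → ℝ := fun i j => Complex.normSq (W i j) with hD
  have hDnn : ∀ i j, 0 ≤ D i j := fun i j => Complex.normSq_nonneg _
  have hcol : ∀ j, ∑ i, D i j = 1 := by
    intro j
    have h1 : star W * W = 1 := Matrix.mem_unitaryGroup_iff'.mp hW
    have this : ∑ i, ((starRingEnd ℂ) (W i j)) * W i j = 1 := by
      have h3 : (star W * W) j j = (1 : Matrix n n ℂ) j j := by rw [h1]
      simpa [Matrix.mul_apply, Matrix.star_apply, Matrix.one_apply_eq] using h3
    have h2 : ∑ i, ((Complex.normSq (W i j) : ℝ) : ℂ) = 1 := by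
      rw [← this]; congr 1; ext i; rw [mul_comm, Complex.mul_conj]
    have := congrArg Complex.re h2
    simpa [Complex.ofReal_sum] using this
  have hrow : ∀ i, ∑ j, D i j = 1 := by
    intro i
    have h1 : W * star W = 1 := Matrix.mem_unitaryGroup_iff.mp hW
    have this : ∑ j, W i j * ((starRingEnd ℂ) (W i j)) = 1 := by
      have h3 : (W * star W) i i = (1 : Matrix n n ℂ) i i := by rw [h1]
      simpa [Matrix.mul_apply, Matrix.star_apply, Matrix.one_apply_eq] using h3
    have h2 : ∑ j, ((Complex.normSq (W i j) : ℝ) : ℂ) = 1 := by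
      rw [← this]; congr 1; ext j; rw [Complex.mul_conj]
    have := congrArg Complex.re h2
    simpa [Complex.ofReal_sum] using this
  set mu : n → ℝ := fun j => ∑ i, D i j * q i with hmu
  have hmupos : ∀ j, 0 < mu j := by
    intro j
    obtain ⟨i, hi⟩ : ∃ i, D i j ≠ 0 := by
      by_contra h
      push_neg at h
      have hc := hcol j
      rw [Finset.sum_eq_zero (fun i _ => h i)] at hc
      exact zero_ne_one hc
    exact Finset.sum_pos' (fun i _ => mul_nonneg (hDnn i j) (hq i).le)
      ⟨i, Finset.mem_univ i, mul_pos ((hDnn i j).lt_of_ne (Ne.symm hi)) (hq i)⟩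
  have hmus : ∑ j, mu j = 1 := by
    rw [hmu]
    calc ∑ j, ∑ i, D i j * q i = ∑ i, (∑ j, D i j) * q i := by
          rw [Finset.sum_comm]; congr 1; ext i; rw [Finset.sum_mul]
      _ = ∑ i, q i := by simp [hrow]
      _ = 1 := hqs
  have hg := gibbs_ineq lam mu hl hmupos (by rw [hls, hmus])
  refine hg.trans ?_
  have jensen : ∀ j, ∑ i, D i j * Real.log (q i) ≤ Real.log (mu j) := by
    intro j
    have := (strictConcaveOn_log_Ioi.concaveOn).le_map_sum
      (t := Finset.univ) (w := fun i => D i j) (p := q)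
      (fun i _ => hDnn i j) (hcol j) (fun i _ => Set.mem_Ioi.mpr (hq i))
    simpa [smul_eq_mul] using this
  calc -∑ j, lam j * Real.log (mu j)
      = ∑ j, lam j * (-Real.log (mu j)) := by
        rw [← Finset.sum_neg_distrib]; congr 1; ext j; ring
    _ ≤ ∑ j, lam j * (∑ i, D i j * (-Real.log (q i))) := by
        apply Finset.sum_le_sum
        intro j _
        apply mul_le_mul_of_nonneg_left _ (hl j)
        have := neg_le_neg (jensen j)
        calc -Real.log (mu j) ≤ -∑ i, D i j * Real.log (q i) := this
          _ = ∑ i, D i j * (-Real.log (q i)) := by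
              rw [← Finset.sum_neg_distrib]; congr 1; ext i; ring
    _ = ∑ j, ∑ i, lam j * D i j * (-Real.log (q i)) := by
        refine Finset.sum_congr rfl fun j _ => ?_
        rw [Finset.mul_sum]
        refine Finset.sum_congr rfl fun i _ => ?_
        ring
    _ = ∑ i, ∑ j, lam j * D i j * (-Real.log (q i)) := Finset.sum_comm
    _ = ∑ i, (∑ j, lam j * D i j) * (-Real.log (q i)) := by
        refine Finset.sum_congr rfl fun i _ => ?_
        rw [Finset.sum_mul]

lemma charpoly_diag (c : n → ℂ) :
    (Matrix.diagonal c).charpoly = ∏ i, (X - C (c i)) := by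
  have h : (Matrix.diagonal c).charmatrix
      = Matrix.diagonal (fun i => (X : ℂ[X]) - C (c i)) := by
    ext i j
    by_cases h : i = j
    · subst h; simp
    · simp [Matrix.charmatrix_apply_ne _ _ _ h, Matrix.diagonal_apply_ne _ h]
  rw [Matrix.charpoly, h, Matrix.det_diagonal]

lemma charpoly_conj_unitary (U M : Matrix n n ℂ) (hU : U ∈ Matrix.unitaryGroup n ℂ) :
    (U * M * star U).charpoly = M.charpoly := by
  have h2 : U * star U = 1 := Matrix.mem_unitaryGroup_iff.mp hU
  set U1 := (C : ℂ →+* ℂ[X]).mapMatrix U with hU1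
  set U2 := (C : ℂ →+* ℂ[X]).mapMatrix (star U) with hU2
  have hprod : U1 * U2 = 1 := by
    rw [hU1, hU2, ← _root_.map_mul, h2, _root_.map_one]
  have hcm : (U * M * star U).charmatrix = U1 * M.charmatrix * U2 := by
    rw [Matrix.charmatrix, Matrix.charmatrix, _root_.map_mul, _root_.map_mul]
    rw [Matrix.mul_sub, Matrix.sub_mul]
    congr 1
    calc Matrix.scalar n (X : ℂ[X]) = Matrix.scalar n (X : ℂ[X]) * (U1 * U2) := by
          rw [hprod, mul_one]
      _ = U1 * Matrix.scalar n (X : ℂ[X]) * U2 := by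
          rw [← mul_assoc, (Matrix.scalar_commute (X : ℂ[X]) (fun r' => Commute.all _ _) U1).eq]
  rw [Matrix.charpoly, Matrix.charpoly, hcm, Matrix.det_mul, Matrix.det_mul]
  have hdet : U1.det * U2.det = 1 := by rw [← Matrix.det_mul, hprod, Matrix.det_one]
  calc U1.det * (M.charmatrix).det * U2.det = U1.det * U2.det * (M.charmatrix).det := by ring
    _ = (M.charmatrix).det := by rw [hdet, one_mul]

/-- If a Hermitian matrix has a unitary diagonalization with real diagonal `r`,
then any function summed over its eigenvalues equals the sum over `r`. -/
lemma sum_fn_eigenvalues {A : Matrix n n ℂ} (hA : A.IsHermitian)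
    {W : Matrix n n ℂ} (hW : W ∈ Matrix.unitaryGroup n ℂ) (r : n → ℝ)
    (hdec : A = W * Matrix.diagonal (fun i => (r i : ℂ)) * star W) (g : ℝ → ℝ) :
    ∑ i, g (hA.eigenvalues i) = ∑ i, g (r i) := by
  have h1 : A.charpoly = ∏ i, (X - C ((r i : ℂ))) := by
    rw [hdec, charpoly_conj_unitary _ _ hW, charpoly_diag]
  have h2 : A.charpoly = ∏ i, (X - C ((hA.eigenvalues i : ℂ))) := by
    conv_lhs => rw [hA.spectral_theorem]
    rw [Unitary.conjStarAlgAut_apply, charpoly_conj_unitary _ _ (hA.eigenvectorUnitary).2, charpoly_diag]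
    rfl
  have hroots : ∀ (f : n → ℂ),
      (∏ i, ((X : ℂ[X]) - C (f i))).roots = Finset.univ.val.map f := by
    intro f
    have := Polynomial.roots_multiset_prod_X_sub_C (Finset.univ.val.map f)
    rw [Multiset.map_map] at this
    rw [← this]
    rfl
  have hms : Finset.univ.val.map (fun i => ((hA.eigenvalues i : ℂ)))
      = Finset.univ.val.map (fun i => ((r i : ℂ))) := by
    rw [← hroots, ← hroots, ← h1, ← h2]
  have hms2 : Finset.univ.val.map hA.eigenvalues = Finset.univ.val.map r := by
    apply Multiset.map_injective Complex.ofReal_injective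
    rw [Multiset.map_map, Multiset.map_map]
    exact hms
  have e1 : ∑ i, g (hA.eigenvalues i) = ((Finset.univ.val.map hA.eigenvalues).map g).sum := by
    rw [Multiset.map_map]; rfl
  have e2 : ∑ i, g (r i) = ((Finset.univ.val.map r).map g).sum := by
    rw [Multiset.map_map]; rfl
  rw [e1, e2, hms2]

lemma outer_isHermitian {m : Type*} (v : m → ℂ) : (outer v).IsHermitian := by
  ext i j
  simp [outer, Matrix.conjTranspose_apply, mul_comm]

lemma outer_posSemidef {m : Type*} [Fintype m] (v : m → ℂ) : (outer v).PosSemidef := by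
  refine .of_dotProduct_mulVec_nonneg (outer_isHermitian v) fun x => ?_
  set c : ℂ := ∑ j, star (v j) * x j with hc
  have hmv : (outer v) *ᵥ x = fun i => v i * c := by
    ext i
    simp only [Matrix.mulVec, dotProduct, outer, Matrix.of_apply, hc, Finset.mul_sum]
    exact Finset.sum_congr rfl fun j _ => by rw [starRingEnd_apply]; ring
  have hsc : (∑ i, star (x i) * v i) = star c := by
    rw [hc, star_sum]
    exact Finset.sum_congr rfl fun j _ => by rw [StarMul.star_mul, star_star]
  have h : star x ⬝ᵥ (outer v) *ᵥ x = star c * c := by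
    rw [hmv]
    calc ∑ i, star (x i) * (v i * c) = (∑ i, star (x i) * v i) * c := by
          rw [Finset.sum_mul]; exact Finset.sum_congr rfl fun i _ => (mul_assoc _ _ _).symm
      _ = star c * c := by rw [hsc]
  rw [h, mul_comm, ← starRingEnd_apply, Complex.mul_conj]
  exact Complex.zero_le_real.mpr (Complex.normSq_nonneg _)

lemma trace_outer {m : Type*} [Fintype m] (v : m → ℂ) :
    (outer v).trace = ((∑ i, Complex.normSq (v i) : ℝ) : ℂ) := by
  simp [Matrix.trace, Matrix.diag, outer, Complex.mul_conj]

omit [DecidableEq n] in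
lemma dot_self_eq (v : n → ℂ) :
    star v ⬝ᵥ v = ((∑ i, Complex.normSq (v i) : ℝ) : ℂ) := by
  rw [dotProduct, Complex.ofReal_sum]
  refine Finset.sum_congr rfl fun i _ => ?_
  show star (v i) * v i = _
  rw [mul_comm, ← starRingEnd_apply, Complex.mul_conj]

lemma ptp_outer_apply {α κ τ : Type*} [Fintype α] [Fintype κ] [Fintype τ]
    (u : (α × (κ × τ)) → ℂ) (b1 b2 : κ) :
    ptraceSnd (ptraceFst (outer u)) b1 b2
      = ∑ c : α × τ, u (c.1, (b1, c.2)) * (starRingEnd ℂ) (u (c.1, (b2, c.2))) := by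
  simp only [ptraceSnd, ptraceFst, outer, Matrix.of_apply]
  rw [Fintype.sum_prod_type]
  rw [Finset.sum_comm]

lemma ptp_outer_eq_sum_outer {α κ τ : Type*} [Fintype α] [Fintype κ] [Fintype τ]
    (u : (α × (κ × τ)) → ℂ) :
    ptraceSnd (ptraceFst (outer u))
      = ∑ c : α × τ, outer (fun b => u (c.1, (b, c.2))) := by
  ext b1 b2
  rw [ptp_outer_apply]
  simp [outer, Matrix.sum_apply]

lemma ptp_outer_posSemidef {α κ τ : Type*} [Fintype α] [Fintype κ] [Fintype τ] [DecidableEq κ]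
    (u : (α × (κ × τ)) → ℂ) : (ptraceSnd (ptraceFst (outer u))).PosSemidef := by
  rw [ptp_outer_eq_sum_outer]
  exact Finset.sum_induction _ _ (fun A B hA hB => hA.add hB) Matrix.PosSemidef.zero
    fun c _ => outer_posSemidef _

omit [DecidableEq n] in
lemma posSemidef_real_smul {A : Matrix n n ℂ} (hA : A.PosSemidef) {c : ℝ} (hc : 0 ≤ c) :
    (((c : ℂ)) • A).PosSemidef := by
  refine .of_dotProduct_mulVec_nonneg ?_ fun x => ?_
  · ext i j
    simp only [Matrix.conjTranspose_apply, Matrix.smul_apply, smul_eq_mul, star_mul']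
    have h2 : star (A j i) = A i j := congrFun (congrFun hA.1 i) j
    rw [h2, Complex.star_def, Complex.conj_ofReal]
  · have h := hA.dotProduct_mulVec_nonneg x
    have heq : star x ⬝ᵥ ((c : ℂ) • A) *ᵥ x = (c : ℂ) * (star x ⬝ᵥ A *ᵥ x) := by
      rw [Matrix.smul_mulVec, dotProduct_smul, smul_eq_mul]
    rw [heq]
    exact mul_nonneg (Complex.zero_le_real.mpr hc) h

lemma trace_ptraceFst {m k : Type*} [Fintype m] [Fintype k]
    (M : Matrix (m × k) (m × k) ℂ) : (ptraceFst M).trace = M.trace := by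
  simp only [Matrix.trace, Matrix.diag, ptraceFst, Matrix.of_apply]
  rw [Fintype.sum_prod_type, Finset.sum_comm]

lemma trace_ptraceSnd {m k : Type*} [Fintype m] [Fintype k]
    (M : Matrix (m × k) (m × k) ℂ) : (ptraceSnd M).trace = M.trace := by
  simp only [Matrix.trace, Matrix.diag, ptraceSnd, Matrix.of_apply]
  rw [Fintype.sum_prod_type]

lemma isHermitian_decomp (W : Matrix n n ℂ) (r : n → ℝ) :
    (W * Matrix.diagonal (fun i => (r i : ℂ)) * star W).IsHermitian := by
  have hd : (Matrix.diagonal (fun i => (r i : ℂ)))ᴴ = Matrix.diagonal (fun i => (r i : ℂ)) := by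
    ext i j
    by_cases h : i = j
    · subst h; simp [Matrix.conjTranspose_apply, Complex.star_def, Complex.conj_ofReal]
    · simp [Matrix.conjTranspose_apply, Matrix.diagonal_apply_ne _ h,
        Matrix.diagonal_apply_ne _ (Ne.symm h)]
  have hstar : star W = Wᴴ := rfl
  rw [Matrix.IsHermitian, hstar]
  simp only [Matrix.conjTranspose_mul, Matrix.conjTranspose_conjTranspose]
  rw [hd, mul_assoc]

lemma conj_diag_apply (W : Matrix n n ℂ) (lam : n → ℝ) (i : n) :
    (W * Matrix.diagonal (fun j => (lam j : ℂ)) * star W) i i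
      = ((∑ j, lam j * Complex.normSq (W i j) : ℝ) : ℂ) := by
  have hexp : (W * Matrix.diagonal (fun j => (lam j : ℂ)) * star W) i i
      = ∑ k, W i k * (lam k : ℂ) * star (W i k) := by
    simp only [Matrix.mul_apply, Matrix.diagonal_apply, Matrix.star_apply]
    refine Finset.sum_congr rfl fun k _ => ?_
    congr 1
    rw [Finset.sum_eq_single k]
    · rw [if_pos rfl]
    · intro b _ hb; rw [if_neg hb, mul_zero]
    · intro h; exact absurd (Finset.mem_univ k) h
  rw [hexp, Complex.ofReal_sum]
  refine Finset.sum_congr rfl fun k _ => ?_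
  rw [Complex.ofReal_mul, mul_comm (W i k) _, mul_assoc, ← starRingEnd_apply, Complex.mul_conj]

lemma trace_diagonal_mul (c : n → ℂ) (M : Matrix n n ℂ) :
    (Matrix.diagonal c * M).trace = ∑ i, c i * M i i := by
  simp [Matrix.trace, Matrix.diag, Matrix.mul_apply, Matrix.diagonal_apply]

lemma kron_one_mulVec_apply {m k : Type*} [Fintype m] [Fintype k] [DecidableEq k]
    (Q : Matrix m m ℂ) (v : m × k → ℂ) (a : m) (b : k) :
    ((Q ⊗ₖ (1 : Matrix k k ℂ)) *ᵥ v) (a, b) = ∑ a', Q a a' * v (a', b) := by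
  show ∑ c : m × k, (Q ⊗ₖ (1 : Matrix k k ℂ)) (a, b) c * v c = _
  rw [Fintype.sum_prod_type]
  refine Finset.sum_congr rfl fun a' _ => ?_
  rw [Finset.sum_eq_single b]
  · simp [Matrix.kroneckerMap_apply, Matrix.one_apply]
  · intro b' _ hb
    simp [Matrix.kroneckerMap_apply, Matrix.one_apply, Ne.symm hb]
  · intro h; exact absurd (Finset.mem_univ b) h

lemma sum_ptraceFst_conj {m k : Type*} [Fintype m] [Fintype k] [DecidableEq m] [DecidableEq k]
    {ι : Type*} [Fintype ι] (P : ι → Matrix m m ℂ)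
    (hPH : ∀ x, (P x)ᴴ = P x) (hproj : ∀ x, P x * P x = P x) (hsumP : ∑ x, P x = 1)
    (v : m × k → ℂ) :
    ∑ x, ptraceFst (outer ((P x ⊗ₖ (1 : Matrix k k ℂ)) *ᵥ v)) = ptraceFst (outer v) := by
  have hone : ∀ a'' a' : m, (∑ x, ∑ a, (starRingEnd ℂ) (P x a a'') * P x a a')
      = if a'' = a' then 1 else 0 := by
    intro a'' a'
    have hx : ∀ x, (∑ a, (starRingEnd ℂ) (P x a a'') * P x a a') = P x a'' a' := by
      intro x
      have hconj : ∀ a, (starRingEnd ℂ) (P x a a'') = P x a'' a := by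
        intro a
        have h5 := congrFun (congrFun (hPH x) a'') a
        rw [starRingEnd_apply, ← Matrix.conjTranspose_apply, h5]
      calc ∑ a, (starRingEnd ℂ) (P x a a'') * P x a a'
          = ∑ a, P x a'' a * P x a a' := Finset.sum_congr rfl fun a _ => by rw [hconj]
        _ = (P x * P x) a'' a' := (Matrix.mul_apply).symm
        _ = P x a'' a' := by rw [hproj]
    rw [Finset.sum_congr rfl fun x _ => hx x]
    have := congrFun (congrFun hsumP a'') a'
    rw [Matrix.sum_apply] at this
    rw [this, Matrix.one_apply]
  ext b1 b2
  rw [Matrix.sum_apply]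
  have key : ∀ x, (ptraceFst (outer ((P x ⊗ₖ (1 : Matrix k k ℂ)) *ᵥ v))) b1 b2
      = ∑ a' : m, ∑ a'' : m, (∑ a : m, (starRingEnd ℂ) (P x a a'') * P x a a')
          * (v (a', b1) * (starRingEnd ℂ) (v (a'', b2))) := by
    intro x
    show (∑ a, ((P x ⊗ₖ (1 : Matrix k k ℂ)) *ᵥ v) (a, b1)
        * (starRingEnd ℂ) (((P x ⊗ₖ (1 : Matrix k k ℂ)) *ᵥ v) (a, b2))) = _
    calc ∑ a, ((P x ⊗ₖ (1 : Matrix k k ℂ)) *ᵥ v) (a, b1)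
          * (starRingEnd ℂ) (((P x ⊗ₖ (1 : Matrix k k ℂ)) *ᵥ v) (a, b2))
        = ∑ a, ∑ a', ∑ a'', (P x a a' * v (a', b1))
            * ((starRingEnd ℂ) (P x a a'') * (starRingEnd ℂ) (v (a'', b2))) := by
          refine Finset.sum_congr rfl fun a _ => ?_
          rw [kron_one_mulVec_apply, kron_one_mulVec_apply, map_sum, Finset.sum_mul_sum]
          exact Finset.sum_congr rfl fun a' _ => Finset.sum_congr rfl fun a'' _ => by
            rw [_root_.map_mul]
      _ = ∑ a', ∑ a'', (∑ a, (starRingEnd ℂ) (P x a a'') * P x a a')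
            * (v (a', b1) * (starRingEnd ℂ) (v (a'', b2))) := by
          rw [Finset.sum_comm]
          refine Finset.sum_congr rfl fun a' _ => ?_
          rw [Finset.sum_comm]
          refine Finset.sum_congr rfl fun a'' _ => ?_
          rw [Finset.sum_mul]
          exact Finset.sum_congr rfl fun a _ => by ring
  rw [Finset.sum_congr rfl fun x _ => key x]
  rw [Finset.sum_comm]
  show (∑ a' : m, ∑ x, ∑ a'' : m, _) = _
  calc ∑ a' : m, ∑ x, ∑ a'' : m, (∑ a : m, (starRingEnd ℂ) (P x a a'') * P x a a')
          * (v (a', b1) * (starRingEnd ℂ) (v (a'', b2)))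
      = ∑ a' : m, ∑ a'' : m, (∑ x, ∑ a : m, (starRingEnd ℂ) (P x a a'') * P x a a')
          * (v (a', b1) * (starRingEnd ℂ) (v (a'', b2))) := by
        refine Finset.sum_congr rfl fun a' _ => ?_
        rw [Finset.sum_comm]
        refine Finset.sum_congr rfl fun a'' _ => ?_
        rw [Finset.sum_mul]
    _ = ∑ a' : m, v (a', b1) * (starRingEnd ℂ) (v (a', b2)) := by
        refine Finset.sum_congr rfl fun a' _ => ?_
        rw [Finset.sum_congr rfl fun a'' (_ : a'' ∈ Finset.univ) => by rw [hone a'' a']]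
        rw [Finset.sum_eq_single a']
        · rw [if_pos rfl, one_mul]
        · intro b _ hb; rw [if_neg hb, zero_mul]
        · intro h; exact absurd (Finset.mem_univ a') h
    _ = (ptraceFst (outer v)) b1 b2 := rfl

lemma ptraceSnd_sum {m k : Type*} [Fintype m] [Fintype k] {ι : Type*} [Fintype ι]
    (M : ι → Matrix (m × k) (m × k) ℂ) :
    ptraceSnd (∑ x, M x) = ∑ x, ptraceSnd (M x) := by
  ext i1 i2
  simp only [ptraceSnd, Matrix.of_apply, Matrix.sum_apply]
  rw [Finset.sum_comm]

end AuxLemmas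

/-- Theorem 1 of the paper: for any rank-one projective
measurement on `AA'` of the thermal field double ⊗ Bell state, followed by
conditional unitaries on `B`, the average teleported entanglement entropy plus
`β` times the average extracted energy is bounded by the thermal entropy. -/
theorem QET_QIT_tradeoff_thermal {d : ℕ} (hd : 0 < d) {ι : Type*} [Fintype ι]
    (En : Fin d → ℝ) (β : ℝ) (hβ : 0 < β)
    (Ham : Matrix (Fin d) (Fin d) ℂ)
    (hHam : Ham = Matrix.diagonal fun x => (En x : ℂ))
    (Z : ℝ) (hZ : Z = ∑ x, Real.exp (-(β * En x)))
    -- thermal field double state on A ⊗ B (in the energy eigenbasis)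
    (tfd : Fin d × Fin d → ℂ)
    (htfd : tfd = fun q =>
      if q.1 = q.2 then (Real.sqrt (Real.exp (-(β * En q.1)) / Z) : ℂ) else 0)
    -- maximally entangled state on A' ⊗ R
    (Phi : Fin d × Fin d → ℂ)
    (hPhi : Phi = fun q => if q.1 = q.2 then ((Real.sqrt d)⁻¹ : ℂ) else 0)
    -- initial global state, indexed by (A × A') × (B × R)
    (ψ : (Fin d × Fin d) × (Fin d × Fin d) → ℂ)
    (hψ : ψ = fun q => tfd (q.1.1, q.2.1) * Phi (q.1.2, q.2.2))
    -- rank-one projective measurement on A × A'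
    (P : ι → Matrix (Fin d × Fin d) (Fin d × Fin d) ℂ)
    (hrank1 : ∀ x, ∃ v, P x = outer v)
    (hproj : ∀ x, P x * P x = P x)
    (hsumP : ∑ x, P x = 1)
    -- conditional unitaries on B
    (U : ι → Matrix (Fin d) (Fin d) ℂ) (hU : ∀ x, IsUnitaryMat (U x))
    -- post-measurement global vectors, outcome probabilities, Bob's states
    (w : ι → (Fin d × Fin d) × (Fin d × Fin d) → ℂ)
    (hw : ∀ x, w x =
      (P x ⊗ₖ (1 : Matrix (Fin d × Fin d) (Fin d × Fin d) ℂ)) *ᵥ ψ)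
    (p : ι → ℝ) (hp : ∀ x, p x = (star (w x) ⬝ᵥ w x).re)
    (ρ : ι → Matrix (Fin d) (Fin d) ℂ)
    (hρ : ∀ x, p x ≠ 0 →
      ρ x = ((p x : ℂ))⁻¹ • ptraceSnd (ptraceFst (outer (w x)))) :
    ∑ x, p x * vnEntropy (ρ x)
      + β * ∑ x, p x * ((Ham * (ρ x - U x * ρ x * star (U x))).trace).re
      ≤ vnEntropy (gibbs β Ham) := by
  haveI : Nonempty (Fin d) := ⟨⟨0, hd⟩⟩
  classical
  set q : Fin d → ℝ := fun i => Real.exp (-(β * En i)) / Z with hqdef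
  have hZpos : 0 < Z := by
    rw [hZ]; exact Finset.sum_pos (fun i _ => Real.exp_pos _) Finset.univ_nonempty
  have hqpos : ∀ i, 0 < q i := fun i => div_pos (Real.exp_pos _) hZpos
  have hqsum : ∑ i, q i = 1 := by
    rw [hqdef, ← Finset.sum_div, ← hZ, div_self hZpos.ne']
  have hlogq : ∀ i, -Real.log (q i) = β * En i + Real.log Z := by
    intro i
    rw [hqdef]
    rw [show (fun i => Real.exp (-(β * En i)) / Z) i = Real.exp (-(β * En i)) / Z from rfl]
    rw [Real.log_div (Real.exp_ne_zero _) hZpos.ne', Real.log_exp]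
    ring
  have hPH : ∀ x, (P x)ᴴ = P x := by
    intro x
    obtain ⟨v, hv⟩ := hrank1 x
    rw [hv]; exact outer_isHermitian v
  -- the marginal of ψ on B is the Gibbs diagonal
  have hψdiag : ptraceSnd (ptraceFst (outer ψ)) = Matrix.diagonal (fun i => (q i : ℂ)) := by
    ext b1 b2
    rw [ptp_outer_apply ψ b1 b2]
    have hterm : ∀ c : (Fin d × Fin d) × Fin d,
        ψ (c.1, (b1, c.2)) * (starRingEnd ℂ) (ψ (c.1, (b2, c.2)))
        = (tfd (c.1.1, b1) * (starRingEnd ℂ) (tfd (c.1.1, b2)))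
          * (Phi (c.1.2, c.2) * (starRingEnd ℂ) (Phi (c.1.2, c.2))) := by
      intro c
      rw [hψ]
      simp only [_root_.map_mul]
      ring
    rw [Finset.sum_congr rfl fun c _ => hterm c]
    have hPhival : ∀ a b : Fin d, Phi (a, b) = if a = b then ((Real.sqrt d : ℂ))⁻¹ else 0 := by
      intro a b; rw [hPhi]
    have hPhisum : ∀ j' : Fin d, ∑ r : Fin d, Phi (j', r) * (starRingEnd ℂ) (Phi (j', r))
        = (((d : ℝ)⁻¹ : ℝ) : ℂ) := by
      intro j'
      rw [Finset.sum_eq_single j']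
      · rw [hPhival, if_pos rfl]
        rw [Complex.mul_conj, Complex.normSq_inv]
        rw [show ((Real.sqrt d : ℝ) : ℂ).normSq = Real.sqrt d * Real.sqrt d from
          Complex.normSq_ofReal _]
        rw [Real.mul_self_sqrt (Nat.cast_nonneg d)]
      · intro r _ hr
        rw [hPhival, if_neg (Ne.symm hr), map_zero, mul_zero]
      · intro h; exact absurd (Finset.mem_univ j') h
    rw [Fintype.sum_prod_type]
    have hstep1 : ∀ a : Fin d × Fin d, (∑ r : Fin d,
        (tfd (a.1, b1) * (starRingEnd ℂ) (tfd (a.1, b2)))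
          * (Phi (a.2, r) * (starRingEnd ℂ) (Phi (a.2, r))))
        = (tfd (a.1, b1) * (starRingEnd ℂ) (tfd (a.1, b2))) * (((d : ℝ)⁻¹ : ℝ) : ℂ) := by
      intro a
      rw [← Finset.mul_sum, hPhisum]
    rw [Finset.sum_congr rfl fun a _ => hstep1 a]
    rw [Fintype.sum_prod_type]
    have hstep2 : ∀ j : Fin d, (∑ _j' : Fin d,
        (tfd (j, b1) * (starRingEnd ℂ) (tfd (j, b2))) * (((d : ℝ)⁻¹ : ℝ) : ℂ))
        = tfd (j, b1) * (starRingEnd ℂ) (tfd (j, b2)) := by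
      intro j
      rw [Finset.sum_const, Finset.card_univ, Fintype.card_fin, nsmul_eq_mul]
      rw [mul_comm, mul_assoc]
      rw [show ((((d : ℝ)⁻¹ : ℝ)) : ℂ) * (d : ℂ) = 1 from by
        push_cast
        exact inv_mul_cancel₀ (by exact_mod_cast hd.ne')]
      rw [mul_one]
    rw [Finset.sum_congr rfl fun j _ => hstep2 j]
    have htfdval : ∀ a b : Fin d, tfd (a, b)
        = if a = b then ((Real.sqrt (Real.exp (-(β * En a)) / Z) : ℝ) : ℂ) else 0 := by
      intro a b; rw [htfd]
    have hsqrtq : ∀ b : Fin d, (Real.sqrt (Real.exp (-(β * En b)) / Z) : ℂ)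
        * (starRingEnd ℂ) ((Real.sqrt (Real.exp (-(β * En b)) / Z) : ℂ)) = ((q b : ℝ) : ℂ) := by
      intro b
      rw [Complex.mul_conj]
      rw [show ((Real.sqrt (Real.exp (-(β * En b)) / Z) : ℝ) : ℂ).normSq
          = Real.sqrt (Real.exp (-(β * En b)) / Z) * Real.sqrt (Real.exp (-(β * En b)) / Z) from
        Complex.normSq_ofReal _]
      rw [Real.mul_self_sqrt (div_nonneg (Real.exp_pos _).le hZpos.le)]
    by_cases hb : b1 = b2
    · subst hb
      rw [Matrix.diagonal_apply_eq]
      rw [Finset.sum_eq_single b1]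
      · rw [htfdval, if_pos rfl]
        exact hsqrtq b1
      · intro j _ hj
        rw [htfdval, if_neg hj, zero_mul]
      · intro h; exact absurd (Finset.mem_univ b1) h
    · rw [Matrix.diagonal_apply_ne _ hb]
      apply Finset.sum_eq_zero
      intro j _
      rw [htfdval, htfdval]
      by_cases hj : j = b1
      · subst hj
        rw [if_neg hb, map_zero, mul_zero]
      · rw [if_neg hj, zero_mul]
  -- sum of post-measurement (unnormalized) Bob states equals the Gibbs diagonal
  have hBsum : ∑ x, ptraceSnd (ptraceFst (outer (w x)))
      = Matrix.diagonal (fun i => (q i : ℂ)) := by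
    have h1 : ∑ x, ptraceFst (outer (w x)) = ptraceFst (outer ψ) := by
      have h2 := sum_ptraceFst_conj P hPH hproj hsumP ψ
      rw [← h2]
      exact Finset.sum_congr rfl fun x _ => by rw [hw x]
    calc ∑ x, ptraceSnd (ptraceFst (outer (w x)))
        = ptraceSnd (∑ x, ptraceFst (outer (w x))) := (ptraceSnd_sum _).symm
      _ = ptraceSnd (ptraceFst (outer ψ)) := by rw [h1]
      _ = Matrix.diagonal (fun i => (q i : ℂ)) := hψdiag
  -- probabilities
  have hpnn : ∀ x, 0 ≤ p x := by
    intro x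
    rw [hp x, dot_self_eq, Complex.ofReal_re]
    exact Finset.sum_nonneg fun i _ => Complex.normSq_nonneg _
  have hptr : ∀ x, (ptraceSnd (ptraceFst (outer (w x)))).trace = ((p x : ℝ) : ℂ) := by
    intro x
    rw [trace_ptraceSnd, trace_ptraceFst, trace_outer, hp x, dot_self_eq, Complex.ofReal_re]
  have hpsum : ∑ x, p x = 1 := by
    have h1 := congrArg Matrix.trace hBsum
    rw [Matrix.trace_sum] at h1
    rw [Finset.sum_congr rfl fun x _ => hptr x] at h1
    rw [Matrix.trace_diagonal] at h1
    have h2 : ((∑ x, p x : ℝ) : ℂ) = ((∑ i, q i : ℝ) : ℂ) := by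
      push_cast
      rw [h1]
    have h3 := Complex.ofReal_injective h2
    rw [h3, hqsum]
  have hw0 : ∀ x, p x = 0 → w x = 0 := by
    intro x h
    rw [hp x, dot_self_eq, Complex.ofReal_re] at h
    have h4 : ∀ i ∈ Finset.univ, Complex.normSq (w x i) = 0 := by
      rw [← Finset.sum_eq_zero_iff_of_nonneg (fun i _ => Complex.normSq_nonneg _)]
      exact h
    funext i
    exact Complex.normSq_eq_zero.mp (h4 i (Finset.mem_univ i))
  have hpρ : ∀ x, ((p x : ℝ) : ℂ) • ρ x = ptraceSnd (ptraceFst (outer (w x))) := by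
    intro x
    by_cases h : p x = 0
    · rw [h, hw0 x h]
      ext i j
      simp [ptraceSnd, ptraceFst, outer]
    · rw [hρ x h, smul_smul, mul_inv_cancel₀ (Complex.ofReal_ne_zero.mpr h), one_smul]
  -- global energy bookkeeping
  have hEglob : ∑ x, p x * ((Ham * ρ x).trace).re = ∑ i, En i * q i := by
    have h1 : ∀ x, p x * ((Ham * ρ x).trace).re
        = ((Ham * (((p x : ℝ) : ℂ) • ρ x)).trace).re := by
      intro x
      rw [Matrix.mul_smul, Matrix.trace_smul, smul_eq_mul, Complex.re_ofReal_mul]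
    rw [Finset.sum_congr rfl fun x _ => h1 x]
    rw [← Complex.re_sum]
    rw [← Matrix.trace_sum, ← Finset.mul_sum]
    rw [Finset.sum_congr rfl fun x _ => hpρ x, hBsum]
    rw [hHam, Matrix.diagonal_mul_diagonal]
    rw [Matrix.trace_diagonal, Complex.re_sum]
    refine Finset.sum_congr rfl fun i _ => ?_
    rw [← Complex.ofReal_mul, Complex.ofReal_re]
  -- per-outcome Klein inequality
  have key : ∀ x, p x ≠ 0 → vnEntropy (ρ x)
      ≤ β * ((Ham * (U x * ρ x * star (U x))).trace).re + Real.log Z := by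
    intro x hx
    have hPSD : (ρ x).PosSemidef := by
      rw [hρ x hx]
      rw [show ((p x : ℝ) : ℂ)⁻¹ = (((p x)⁻¹ : ℝ) : ℂ) from by rw [Complex.ofReal_inv]]
      exact posSemidef_real_smul (ptp_outer_posSemidef _) (inv_nonneg.mpr (hpnn x))
    have hherm := hPSD.1
    have hlnn : ∀ j, 0 ≤ hherm.eigenvalues j := hPSD.eigenvalues_nonneg
    have htrρ : (ρ x).trace = 1 := by
      rw [hρ x hx, Matrix.trace_smul, trace_ptraceSnd, trace_ptraceFst, trace_outer]
      rw [show ((∑ i, Complex.normSq (w x i) : ℝ) : ℂ) = ((p x : ℝ) : ℂ) from by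
        rw [hp x, dot_self_eq, Complex.ofReal_re]]
      rw [smul_eq_mul, inv_mul_cancel₀ (Complex.ofReal_ne_zero.mpr hx)]
    set V := (hherm.eigenvectorUnitary : Matrix (Fin d) (Fin d) ℂ) with hV
    have hVmem : V ∈ Matrix.unitaryGroup (Fin d) ℂ := hherm.eigenvectorUnitary.2
    have hlsum : ∑ j, hherm.eigenvalues j = 1 := by
      have h1 : (ρ x).trace = ((∑ j, hherm.eigenvalues j : ℝ) : ℂ) := by
        conv_lhs => rw [hherm.spectral_theorem]
        rw [Unitary.conjStarAlgAut_apply, Matrix.trace_mul_cycle, Matrix.mem_unitaryGroup_iff'.mp hVmem, one_mul]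
        rw [Matrix.trace_diagonal, Complex.ofReal_sum]
        rfl
      rw [htrρ] at h1
      exact_mod_cast h1.symm
    set W := U x * V with hW
    have hWmem : W ∈ Matrix.unitaryGroup (Fin d) ℂ := mul_mem (hU x) hVmem
    have hσ : U x * ρ x * star (U x)
        = W * Matrix.diagonal (fun j => ((hherm.eigenvalues j : ℝ) : ℂ)) * star W := by
      conv_lhs => rw [hherm.spectral_theorem]
      rw [Unitary.conjStarAlgAut_apply, hW, Matrix.star_mul]
      rw [show Matrix.diagonal (RCLike.ofReal ∘ hherm.eigenvalues)
          = Matrix.diagonal (fun j => ((hherm.eigenvalues j : ℝ) : ℂ)) from rfl]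
      noncomm_ring
    have hdiagσ : ∀ i, (U x * ρ x * star (U x)) i i
        = ((∑ j, hherm.eigenvalues j * Complex.normSq (W i j) : ℝ) : ℂ) := by
      intro i
      rw [hσ]
      exact conj_diag_apply W hherm.eigenvalues i
    have hvn : vnEntropy (ρ x) = ∑ j, Real.negMulLog (hherm.eigenvalues j) := by
      rw [vnEntropy, dif_pos hherm]
    have hK := klein_bound hWmem hlnn hlsum hqpos hqsum
    have hE : ((Ham * (U x * ρ x * star (U x))).trace).re
        = ∑ i, En i * (∑ j, hherm.eigenvalues j * Complex.normSq (W i j)) := by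
      rw [hHam, trace_diagonal_mul, Complex.re_sum]
      refine Finset.sum_congr rfl fun i _ => ?_
      rw [hdiagσ i, ← Complex.ofReal_mul, Complex.ofReal_re]
    have htrσ : ∑ i, (∑ j, hherm.eigenvalues j * Complex.normSq (W i j)) = 1 := by
      have h1 : (U x * ρ x * star (U x)).trace = (ρ x).trace := by
        rw [Matrix.trace_mul_cycle, Matrix.mem_unitaryGroup_iff'.mp (hU x), one_mul]
      rw [htrρ] at h1
      have h2 : (U x * ρ x * star (U x)).trace
          = ((∑ i, ∑ j, hherm.eigenvalues j * Complex.normSq (W i j) : ℝ) : ℂ) := by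
        rw [Matrix.trace, Complex.ofReal_sum]
        exact Finset.sum_congr rfl fun i _ => hdiagσ i
      rw [h2] at h1
      exact_mod_cast h1
    calc vnEntropy (ρ x) = ∑ j, Real.negMulLog (hherm.eigenvalues j) := hvn
      _ ≤ ∑ i, (∑ j, hherm.eigenvalues j * Complex.normSq (W i j)) * (-Real.log (q i)) := hK
      _ = ∑ i, (∑ j, hherm.eigenvalues j * Complex.normSq (W i j))
            * (β * En i + Real.log Z) := by
          exact Finset.sum_congr rfl fun i _ => by rw [hlogq i]
      _ = β * ∑ i, En i * (∑ j, hherm.eigenvalues j * Complex.normSq (W i j))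
            + Real.log Z * ∑ i, (∑ j, hherm.eigenvalues j * Complex.normSq (W i j)) := by
          rw [Finset.mul_sum, Finset.mul_sum, ← Finset.sum_add_distrib]
          exact Finset.sum_congr rfl fun i _ => by ring
      _ = β * ((Ham * (U x * ρ x * star (U x))).trace).re + Real.log Z := by
          rw [hE, htrσ, mul_one]
  -- the right-hand side
  have hHamHerm : Ham.IsHermitian := by
    rw [hHam]
    have := isHermitian_decomp (1 : Matrix (Fin d) (Fin d) ℂ) En
    simpa using this
  set f : ℝ → ℝ := fun t => Real.exp (-(β * t)) with hf
  have hHamdec : Ham = (1 : Matrix (Fin d) (Fin d) ℂ)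
      * Matrix.diagonal (fun i => ((En i : ℝ) : ℂ)) * star (1 : Matrix (Fin d) (Fin d) ℂ) := by
    rw [hHam]; simp
  have hHam_eig : ∀ g : ℝ → ℝ, ∑ i, g (hHamHerm.eigenvalues i) = ∑ i, g (En i) :=
    fun g => sum_fn_eigenvalues hHamHerm (one_mem _) En hHamdec g
  set VH := (hHamHerm.eigenvectorUnitary : Matrix (Fin d) (Fin d) ℂ) with hVH
  have hVHmem : VH ∈ Matrix.unitaryGroup (Fin d) ℂ := hHamHerm.eigenvectorUnitary.2
  have hmf : matFun f Ham
      = VH * Matrix.diagonal (fun i => ((f (hHamHerm.eigenvalues i) : ℝ) : ℂ)) * star VH := by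
    rw [matFun, dif_pos hHamHerm]
  have hgZ : gibbsZ β Ham = Z := by
    rw [gibbsZ]
    rw [show (matFun (fun x => Real.exp (-(β * x))) Ham) = matFun f Ham from rfl]
    rw [hmf]
    rw [Matrix.trace_mul_cycle, Matrix.mem_unitaryGroup_iff'.mp hVHmem, one_mul]
    rw [Matrix.trace_diagonal]
    rw [show (∑ i, ((f (hHamHerm.eigenvalues i) : ℝ) : ℂ))
        = ((∑ i, f (hHamHerm.eigenvalues i) : ℝ) : ℂ) from (Complex.ofReal_sum _ _).symm]
    rw [Complex.ofReal_re]
    rw [hHam_eig f, hZ]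
  have hgibbs : gibbs β Ham
      = VH * Matrix.diagonal (fun i => (((Z⁻¹ * f (hHamHerm.eigenvalues i)) : ℝ) : ℂ)) * star VH := by
    rw [gibbs, hgZ]
    rw [show (matFun (fun x => Real.exp (-(β * x))) Ham) = matFun f Ham from rfl]
    rw [hmf]
    rw [← smul_mul_assoc, ← mul_smul_comm]
    congr 1
    congr 1
    ext i j
    by_cases h : i = j
    · subst h
      simp only [Matrix.smul_apply, Matrix.diagonal_apply_eq, smul_eq_mul]
      push_cast
      ring
    · simp only [Matrix.smul_apply, Matrix.diagonal_apply_ne _ h, smul_eq_mul, mul_zero]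
  have hgherm : (gibbs β Ham).IsHermitian := by
    rw [hgibbs]
    exact isHermitian_decomp VH _
  have hRHS : vnEntropy (gibbs β Ham) = ∑ i, Real.negMulLog (q i) := by
    rw [vnEntropy, dif_pos hgherm]
    rw [sum_fn_eigenvalues hgherm hVHmem _ hgibbs Real.negMulLog]
    rw [hHam_eig (fun t => Real.negMulLog (Z⁻¹ * f t))]
    refine Finset.sum_congr rfl fun i _ => ?_
    rw [hqdef]
    rw [show (fun i => Real.exp (-(β * En i)) / Z) i = Real.exp (-(β * En i)) / Z from rfl]
    rw [inv_mul_eq_div]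
  have hfin : ∑ i, Real.negMulLog (q i) = β * ∑ i, En i * q i + Real.log Z := by
    have hper : ∀ i, Real.negMulLog (q i) = q i * (β * En i) + q i * Real.log Z := by
      intro i
      rw [Real.negMulLog]
      linear_combination (q i) * hlogq i
    rw [Finset.sum_congr rfl fun i _ => hper i, Finset.sum_add_distrib]
    rw [← Finset.sum_mul, hqsum, one_mul]
    congr 1
    rw [Finset.mul_sum]
    exact Finset.sum_congr rfl fun i _ => by ring
  -- final assembly
  have hsplit : ∀ x, p x * ((Ham * (ρ x - U x * ρ x * star (U x))).trace).re
      = p x * ((Ham * ρ x).trace).re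
        - p x * ((Ham * (U x * ρ x * star (U x))).trace).re := by
    intro x
    rw [Matrix.mul_sub, Matrix.trace_sub, Complex.sub_re]
    ring
  have hperx : ∀ x, p x * vnEntropy (ρ x)
      - β * (p x * ((Ham * (U x * ρ x * star (U x))).trace).re) ≤ p x * Real.log Z := by
    intro x
    by_cases hx : p x = 0
    · rw [hx]; simp
    · have hpos : 0 < p x := lt_of_le_of_ne (hpnn x) (Ne.symm hx)
      have := key x hx
      nlinarith [this, hpos]
  rw [hRHS, hfin]
  calc ∑ x, p x * vnEntropy (ρ x)
        + β * ∑ x, p x * ((Ham * (ρ x - U x * ρ x * star (U x))).trace).re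
      = (∑ x, (p x * vnEntropy (ρ x)
          - β * (p x * ((Ham * (U x * ρ x * star (U x))).trace).re)))
        + β * ∑ x, p x * ((Ham * ρ x).trace).re := by
        rw [Finset.sum_congr rfl fun x _ => hsplit x]
        rw [Finset.sum_sub_distrib, Finset.sum_sub_distrib]
        rw [show (∑ x, β * (p x * ((Ham * (U x * ρ x * star (U x))).trace).re))
            = β * ∑ x, p x * ((Ham * (U x * ρ x * star (U x))).trace).re from
          (Finset.mul_sum _ _ _).symm]
        ring
    _ ≤ (∑ x, p x * Real.log Z) + β * ∑ x, p x * ((Ham * ρ x).trace).re := by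
        exact add_le_add_left (Finset.sum_le_sum fun x _ => hperx x) _
    _ = Real.log Z + β * ∑ i, En i * q i := by
        rw [← Finset.sum_mul, hpsum, one_mul, hEglob]
    _ = β * ∑ i, En i * q i + Real.log Z := by ring

end
end

section
/- (Bell-measurement saturation) In the setting of Theorem 1 with dim H_A = dim H_{A'} = dim H_B = d and |Φ⟩_{A'R} = d^{-1/2}|𝕀⟩_{A'R}, if Alice measures the generalized Bell basis on AA' (rank-one projectors onto (𝕀 ⊗ W_x)|𝕀⟩/√d for the d² Heisenberg–Weyl unitaries W_x), then each post-measurement state on B equals τ_β, so S(B) = S(τ_β), and zero energy is extracted (E = 0); hence the bound S(B) + βE ≤ S(τ_β) is saturated. -/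
open Matrix BigOperators Finset
open scoped Kronecker ComplexOrder

noncomputable section

variable {n : Type*} [Fintype n] [DecidableEq n]

/-- Functional calculus of a real-diagonal matrix is entrywise. -/
lemma matFun_diagonal (f : ℝ → ℝ) (c : n → ℝ) :
    matFun f (Matrix.diagonal fun i => (c i : ℂ)) = Matrix.diagonal fun i => (f (c i) : ℂ) := by
  set A : Matrix n n ℂ := Matrix.diagonal fun i => (c i : ℂ) with hAdef
  have hA : A.IsHermitian := by
    apply Matrix.isHermitian_diagonal_iff.mpr
    intro i; simp [_root_.IsSelfAdjoint, Complex.conj_ofReal]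
  rw [matFun, dif_pos hA]
  set U : Matrix n n ℂ := (hA.eigenvectorUnitary : Matrix n n ℂ) with hUdef
  have hU : U ∈ Matrix.unitaryGroup n ℂ := hA.eigenvectorUnitary.2
  have hUU : U * star U = 1 := (Matrix.mem_unitaryGroup_iff).mp hU
  have hsUU : star U * U = 1 := (Matrix.mem_unitaryGroup_iff').mp hU
  have hAU : A * U = U * Matrix.diagonal (fun i => (hA.eigenvalues i : ℂ)) := by
    conv_lhs => rw [hA.spectral_theorem]
    rw [Unitary.conjStarAlgAut_apply, ← hUdef, mul_assoc, mul_assoc, hsUU, mul_one]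
    rfl
  have key : ∀ j i, (f (hA.eigenvalues i) : ℂ) * U j i = (f (c j) : ℂ) * U j i := by
    intro j i
    rcases eq_or_ne (U j i) 0 with h | h
    · simp [h]
    · have h2 := congrFun (congrFun hAU j) i
      rw [Matrix.mul_apply, Matrix.mul_apply] at h2
      simp only [hAdef, Matrix.diagonal_apply, ite_mul, mul_ite, zero_mul, mul_zero,
        Finset.sum_ite_eq, Finset.sum_ite_eq', Finset.mem_univ, if_true] at h2
      have hc : (hA.eigenvalues i : ℂ) = (c j : ℂ) := by
        have h3 := h2.symm
        rw [mul_comm] at h3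
        exact mul_right_cancel₀ h h3
      have h4 : hA.eigenvalues i = c j := by exact_mod_cast hc
      rw [h4]
  ext j k
  have h1 : ((U * Matrix.diagonal (fun i => (f (hA.eigenvalues i) : ℂ))) * star U) j k
      = ∑ i, (f (hA.eigenvalues i) : ℂ) * U j i * (star U) i k := by
    rw [Matrix.mul_apply]
    refine Finset.sum_congr rfl fun i _ => ?_
    rw [Matrix.mul_apply]
    simp only [Matrix.diagonal_apply, mul_ite, mul_zero, Finset.sum_ite_eq, Finset.sum_ite_eq',
      Finset.mem_univ, if_true]
    ring
  rw [h1]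
  have h3 : ∀ i, (f (hA.eigenvalues i) : ℂ) * U j i * (star U) i k
      = (f (c j) : ℂ) * (U j i * (star U) i k) := by
    intro i; rw [key]; ring
  rw [Finset.sum_congr rfl (fun i _ => h3 i), ← Finset.mul_sum]
  have h4 : ∑ i, U j i * (star U) i k = (1 : Matrix n n ℂ) j k := by
    rw [← Matrix.mul_apply, hUU]
  rw [h4]
  by_cases hjk : j = k <;> simp [Matrix.one_apply, Matrix.diagonal_apply, hjk]

/-- Bell-measurement saturation: measuring the generalized Bell
basis on `AA'` leaves Bob in `τ_β` with probability `1/d²` for each outcome,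
so `S(B) = S(τ_β)` and (with trivial conditional unitaries) `E = 0`,
saturating the trade-off bound. -/
theorem bell_measurement_saturation {d : ℕ} (hd : 0 < d)     
    (En : Fin d → ℝ) (β : ℝ) (hβ : 0 < β)
    (Ham : Matrix (Fin d) (Fin d) ℂ)
    (hHam : Ham = Matrix.diagonal fun x => (En x : ℂ))
    (Z : ℝ) (hZ : Z = ∑ x, Real.exp (-(β * En x)))
    -- thermal field double state on A ⊗ B (in the energy eigenbasis)
    (tfd : Fin d × Fin d → ℂ)
    (htfd : tfd = fun q =>
      if q.1 = q.2 then (Real.sqrt (Real.exp (-(β * En q.1)) / Z) : ℂ) else 0)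
    -- maximally entangled state on A' ⊗ R
    (Phi : Fin d × Fin d → ℂ)
    (hPhi : Phi = fun q => if q.1 = q.2 then ((Real.sqrt d)⁻¹ : ℂ) else 0)
    -- initial global state, indexed by (A × A') × (B × R)
    (ψ : (Fin d × Fin d) × (Fin d × Fin d) → ℂ)
    (hψ : ψ = fun q => tfd (q.1.1, q.2.1) * Phi (q.1.2, q.2.2))
    -- Heisenberg–Weyl unitaries and the Bell projectors
    (ω : ℂ) (hω : ω = Complex.exp (2 * Real.pi * Complex.I / d))
    (W : Fin d × Fin d → Matrix (Fin d) (Fin d) ℂ)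
    (hW : ∀ a b : Fin d, W (a, b) =
      Matrix.of fun i j => if i = j + a then ω ^ ((b : ℕ) * (j : ℕ)) else 0)
    (P : Fin d × Fin d → Matrix (Fin d × Fin d) (Fin d × Fin d) ℂ)
    (hP : ∀ x, P x = outer
      (((Real.sqrt d)⁻¹ : ℂ) • (((1 : Matrix (Fin d) (Fin d) ℂ) ⊗ₖ W x) *ᵥ maxEnt d)))
    (w : Fin d × Fin d → (Fin d × Fin d) × (Fin d × Fin d) → ℂ)
    (hw : ∀ x, w x =
      (P x ⊗ₖ (1 : Matrix (Fin d × Fin d) (Fin d × Fin d) ℂ)) *ᵥ ψ)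
    (p : Fin d × Fin d → ℝ) (hp : ∀ x, p x = (star (w x) ⬝ᵥ w x).re)
    (ρ : Fin d × Fin d → Matrix (Fin d) (Fin d) ℂ)
    (hρ : ∀ x, ρ x = ((p x : ℂ))⁻¹ • ptraceSnd (ptraceFst (outer (w x)))) :
    (∀ x, p x = ((d : ℝ) ^ 2)⁻¹) ∧
    (∀ x, ρ x = gibbs β Ham) ∧
    (∑ x, p x * vnEntropy (ρ x)
      + β * ∑ x, p x *
          ((Ham * (ρ x - (1 : Matrix (Fin d) (Fin d) ℂ) * ρ x *
            star (1 : Matrix (Fin d) (Fin d) ℂ))).trace).re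
      = vnEntropy (gibbs β Ham)) := by
  -- basic facts
  have hd0 : (d : ℝ) ≠ 0 := Nat.cast_ne_zero.mpr hd.ne'
  have hdc0 : (d : ℂ) ≠ 0 := Nat.cast_ne_zero.mpr hd.ne'
  have hdnn : (0:ℝ) ≤ d := Nat.cast_nonneg d
  have hZpos : 0 < Z := by
    rw [hZ]
    have : Nonempty (Fin d) := ⟨⟨0, hd⟩⟩
    exact Finset.sum_pos (fun i _ => Real.exp_pos _) Finset.univ_nonempty
  set g : Fin d → ℝ := fun b => Real.sqrt (Real.exp (-(β * En b)) / Z) with hg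
  have hgsq : ∀ b, g b * g b = Real.exp (-(β * En b)) / Z := fun b =>
    Real.mul_self_sqrt (div_nonneg (Real.exp_pos _).le hZpos.le)
  have hgsum : ∑ b, ((g b : ℂ) * (g b : ℂ)) = 1 := by
    have h1 : ∑ b, (g b * g b) = 1 := by
      simp only [hgsq]
      rw [← Finset.sum_div, ← hZ, div_self hZpos.ne']
    calc ∑ b, ((g b : ℂ) * (g b : ℂ)) = ((∑ b, g b * g b : ℝ) : ℂ) := by push_cast; ring
      _ = 1 := by rw [h1]; norm_num
  have hsd : ((Real.sqrt (d:ℝ) : ℝ) : ℂ)⁻¹ * ((Real.sqrt (d:ℝ) : ℝ) : ℂ)⁻¹ = (d : ℂ)⁻¹ := by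
    rw [← mul_inv, ← Complex.ofReal_mul, Real.mul_self_sqrt hdnn]
    push_cast
    ring
  -- entries of W
  have hWent : ∀ (x : Fin d × Fin d) (i j : Fin d),
      W x i j = if i = j + x.1 then ω ^ ((x.2 : ℕ) * (j : ℕ)) else 0 := by
    intro x i j
    rw [show x = (x.1, x.2) from rfl, hW x.1 x.2]
    rfl
  -- |ω| = 1 facts
  have habs : ‖ω‖ = 1 := by
    rw [hω]
    have h1 : (2 * (Real.pi : ℂ) * Complex.I / d) = ((2 * Real.pi / d : ℝ) : ℂ) * Complex.I := by
      push_cast; ring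
    rw [h1, Complex.norm_exp]
    simp
  have hωconj : ∀ m : ℕ, (starRingEnd ℂ) (ω ^ m) * ω ^ m = 1 := by
    intro m
    have h1 : ‖ω ^ m‖ = 1 := by rw [norm_pow, habs, one_pow]
    have h2 : (starRingEnd ℂ) (ω ^ m) * ω ^ m = ((Complex.normSq (ω ^ m) : ℝ) : ℂ) := by
      rw [mul_comm, Complex.mul_conj]
    rw [h2, Complex.normSq_eq_norm_sq, h1]
    norm_num
  -- column orthonormality of W
  have hWcol : ∀ (x : Fin d × Fin d) (b1 b2 : Fin d),
      (∑ r, (starRingEnd ℂ) (W x r b1) * W x r b2) = if b1 = b2 then 1 else 0 := by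
    intro x b1 b2
    by_cases h : b1 = b2
    · subst h
      rw [if_pos rfl, Finset.sum_eq_single (b1 + x.1)]
      · rw [hWent, if_pos rfl, hωconj]
      · intro r _ hr
        rw [hWent, if_neg hr, map_zero, zero_mul]
      · simp
    · rw [if_neg h]
      apply Finset.sum_eq_zero
      intro r _
      rw [hWent, hWent]
      by_cases h1 : r = b1 + x.1
      · have h2 : r ≠ b2 + x.1 := by
          intro h2
          exact h (add_right_cancel (h1.symm.trans h2))
        rw [if_neg h2, mul_zero]
      · rw [if_neg h1, map_zero, zero_mul]
  have hWrow : ∀ (x : Fin d × Fin d),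
      (∑ a, ∑ a', (starRingEnd ℂ) (W x a' a) * W x a' a) = (d : ℂ) := by
    intro x
    have h1 : ∀ a : Fin d, (∑ a', (starRingEnd ℂ) (W x a' a) * W x a' a) = 1 := by
      intro a
      rw [hWcol x a a, if_pos rfl]
    simp [h1]
  -- value of the Bell vector
  have hv : ∀ (x : Fin d × Fin d) (a a' : Fin d),
      (((Real.sqrt d)⁻¹ : ℂ) • (((1 : Matrix (Fin d) (Fin d) ℂ) ⊗ₖ W x) *ᵥ maxEnt d)) (a, a')
        = ((Real.sqrt d)⁻¹ : ℂ) * W x a' a := by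
    intro x a a'
    simp only [Pi.smul_apply, smul_eq_mul]
    congr 1
    rw [Matrix.mulVec, dotProduct, Fintype.sum_prod_type]
    simp only [Matrix.kroneckerMap_apply, maxEnt, Matrix.one_apply]
    rw [Finset.sum_eq_single a]
    · simp
    · intro j _ hj
      apply Finset.sum_eq_zero
      intro j' _
      simp [Ne.symm hj]
    · simp
  -- value of w
  have hwval : ∀ (x : Fin d × Fin d) (a a' b r : Fin d),
      w x ((a, a'), (b, r)) = (d : ℂ)⁻¹ * W x a' a * (starRingEnd ℂ) (W x r b)
        * (g b : ℂ) * ((Real.sqrt (d:ℝ) : ℝ) : ℂ)⁻¹ := by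
    intro x a a' b r
    rw [hw, Matrix.mulVec, dotProduct]
    rw [Finset.sum_eq_single (((b, r), (b, r)) : (Fin d × Fin d) × (Fin d × Fin d))]
    · rw [Matrix.kroneckerMap_apply, hP, outer]
      simp only [Matrix.of_apply, Matrix.one_apply_eq, hψ, htfd, hPhi, hv, if_pos rfl, if_true,
        ite_true, _root_.map_mul, map_inv₀, Complex.conj_ofReal]
      linear_combination (W x a' a * (starRingEnd ℂ) (W x r b) * (g b : ℂ)
        * ((Real.sqrt (d:ℝ) : ℝ) : ℂ)⁻¹) * hsd
    · rintro ⟨⟨c, c'⟩, ⟨e, s⟩⟩ _ hne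
      simp only [Matrix.kroneckerMap_apply, hψ, htfd, hPhi, Matrix.one_apply]
      by_cases h1 : ((b, r) : Fin d × Fin d) = (e, s)
      · obtain ⟨rfl, rfl⟩ := Prod.ext_iff.mp h1
        by_cases h2 : c = b
        · by_cases h3 : c' = r
          · exact absurd (by rw [h2, h3]) hne
          · simp [h3]
        · simp [h2]
      · rw [if_neg h1]
        ring
    · simp
  -- the probability
  have hpc : ∀ x, star (w x) ⬝ᵥ w x = ((((d : ℝ) ^ 2)⁻¹ : ℝ) : ℂ) := by
    intro x
    have hterm : ∀ a a' b r : Fin d,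
        (starRingEnd ℂ) (w x ((a, a'), (b, r))) * w x ((a, a'), (b, r))
          = (((d : ℂ)⁻¹ * (d : ℂ)⁻¹ * (d : ℂ)⁻¹)
              * (((starRingEnd ℂ) (W x r b) * W x r b) * ((g b : ℂ) * (g b : ℂ)))
              * ((starRingEnd ℂ) (W x a' a) * W x a' a)) := by
      intro a a' b r
      rw [hwval]
      simp only [_root_.map_mul, map_inv₀, Complex.conj_ofReal, Complex.conj_conj,
        Complex.conj_natCast]
      linear_combination ((d:ℂ)⁻¹ * (d:ℂ)⁻¹ * (((starRingEnd ℂ) (W x r b) * W x r b)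
        * ((g b : ℂ) * (g b : ℂ))) * ((starRingEnd ℂ) (W x a' a) * W x a' a)) * hsd
    have hquad : star (w x) ⬝ᵥ w x
        = ∑ a : Fin d, ∑ a' : Fin d, ∑ b : Fin d, ∑ r : Fin d,
            (starRingEnd ℂ) (w x ((a, a'), (b, r))) * w x ((a, a'), (b, r)) := by
      simp only [dotProduct, Fintype.sum_prod_type, Pi.star_apply, RCLike.star_def]
    rw [hquad]
    have e1 : ∀ a a' b : Fin d,
        (∑ r : Fin d, (((d : ℂ)⁻¹ * (d : ℂ)⁻¹ * (d : ℂ)⁻¹)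
              * (((starRingEnd ℂ) (W x r b) * W x r b) * ((g b : ℂ) * (g b : ℂ)))
              * ((starRingEnd ℂ) (W x a' a) * W x a' a)))
          = ((d : ℂ)⁻¹ * (d : ℂ)⁻¹ * (d : ℂ)⁻¹) * ((g b : ℂ) * (g b : ℂ))
              * ((starRingEnd ℂ) (W x a' a) * W x a' a) := by
      intro a a' b
      calc (∑ r : Fin d, (((d : ℂ)⁻¹ * (d : ℂ)⁻¹ * (d : ℂ)⁻¹)
              * (((starRingEnd ℂ) (W x r b) * W x r b) * ((g b : ℂ) * (g b : ℂ)))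
              * ((starRingEnd ℂ) (W x a' a) * W x a' a)))
          = (∑ r : Fin d, (((d : ℂ)⁻¹ * (d : ℂ)⁻¹ * (d : ℂ)⁻¹) * ((g b : ℂ) * (g b : ℂ))
              * ((starRingEnd ℂ) (W x a' a) * W x a' a)) * ((starRingEnd ℂ) (W x r b) * W x r b)) :=
            Finset.sum_congr rfl (fun r _ => by ring)
        _ = (((d : ℂ)⁻¹ * (d : ℂ)⁻¹ * (d : ℂ)⁻¹) * ((g b : ℂ) * (g b : ℂ))
              * ((starRingEnd ℂ) (W x a' a) * W x a' a)) * ∑ r, (starRingEnd ℂ) (W x r b) * W x r b := by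
            rw [Finset.mul_sum]
        _ = _ := by rw [hWcol x b b, if_pos rfl, mul_one]
    have e2 : ∀ a a' : Fin d,
        (∑ b : Fin d, ((d : ℂ)⁻¹ * (d : ℂ)⁻¹ * (d : ℂ)⁻¹) * ((g b : ℂ) * (g b : ℂ))
              * ((starRingEnd ℂ) (W x a' a) * W x a' a))
          = ((d : ℂ)⁻¹ * (d : ℂ)⁻¹ * (d : ℂ)⁻¹)
              * ((starRingEnd ℂ) (W x a' a) * W x a' a) := by
      intro a a'
      calc (∑ b : Fin d, ((d : ℂ)⁻¹ * (d : ℂ)⁻¹ * (d : ℂ)⁻¹) * ((g b : ℂ) * (g b : ℂ))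
              * ((starRingEnd ℂ) (W x a' a) * W x a' a))
          = (∑ b : Fin d, (((d : ℂ)⁻¹ * (d : ℂ)⁻¹ * (d : ℂ)⁻¹)
              * ((starRingEnd ℂ) (W x a' a) * W x a' a)) * ((g b : ℂ) * (g b : ℂ))) :=
            Finset.sum_congr rfl (fun b _ => by ring)
        _ = (((d : ℂ)⁻¹ * (d : ℂ)⁻¹ * (d : ℂ)⁻¹)
              * ((starRingEnd ℂ) (W x a' a) * W x a' a)) * ∑ b, ((g b : ℂ) * (g b : ℂ)) := by
            rw [Finset.mul_sum]
        _ = _ := by rw [hgsum, mul_one]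
    calc (∑ a : Fin d, ∑ a' : Fin d, ∑ b : Fin d, ∑ r : Fin d,
            (starRingEnd ℂ) (w x ((a, a'), (b, r))) * w x ((a, a'), (b, r)))
        = ∑ a : Fin d, ∑ a' : Fin d, ((d : ℂ)⁻¹ * (d : ℂ)⁻¹ * (d : ℂ)⁻¹)
              * ((starRingEnd ℂ) (W x a' a) * W x a' a) := by
          refine Finset.sum_congr rfl fun a _ => Finset.sum_congr rfl fun a' _ => ?_
          rw [Finset.sum_congr rfl (fun b _ => Finset.sum_congr rfl (fun r _ => hterm a a' b r))]
          rw [Finset.sum_congr rfl (fun b _ => e1 a a' b), e2]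
      _ = ((d : ℂ)⁻¹ * (d : ℂ)⁻¹ * (d : ℂ)⁻¹)
              * ∑ a : Fin d, ∑ a', ((starRingEnd ℂ) (W x a' a) * W x a' a) := by
          rw [Finset.mul_sum]
          exact Finset.sum_congr rfl fun a _ => by rw [Finset.mul_sum]
      _ = ((d : ℂ)⁻¹ * (d : ℂ)⁻¹ * (d : ℂ)⁻¹) * (d : ℂ) := by rw [hWrow x]
      _ = ((((d : ℝ) ^ 2)⁻¹ : ℝ) : ℂ) := by
          push_cast
          field_simp
  have claim1 : ∀ x, p x = ((d : ℝ) ^ 2)⁻¹ := by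
    intro x
    rw [hp, hpc]
    exact Complex.ofReal_re _
  -- the Gibbs state is diagonal
  have hmf : matFun (fun t => Real.exp (-(β * t))) Ham
      = Matrix.diagonal (fun i => ((Real.exp (-(β * En i)) : ℝ) : ℂ)) := by
    rw [hHam]; exact matFun_diagonal _ _
  have hZg : gibbsZ β Ham = Z := by
    rw [gibbsZ, hmf, Matrix.trace_diagonal, hZ]
    rw [← Complex.ofReal_sum]
    exact Complex.ofReal_re _
  have hgibbs : gibbs β Ham
      = Matrix.diagonal (fun b => ((Real.exp (-(β * En b)) / Z : ℝ) : ℂ)) := by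
    rw [gibbs, hmf, hZg]
    ext i j
    rcases eq_or_ne i j with h | h
    · subst h
      simp only [Matrix.smul_apply, Matrix.diagonal_apply_eq, smul_eq_mul]
      rw [← Complex.ofReal_inv, ← Complex.ofReal_mul]
      congr 1
      field_simp
    · simp [Matrix.diagonal_apply_ne _ h, h]
  -- the post-measurement states
  have hρentry : ∀ x, ptraceSnd (ptraceFst (outer (w x)))
      = Matrix.diagonal (fun b => ((((d : ℝ) ^ 2)⁻¹ : ℝ) : ℂ) * ((g b : ℂ) * (g b : ℂ))) := by
    intro x
    ext b1 b2
    have h0 : ptraceSnd (ptraceFst (outer (w x))) b1 b2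
        = ∑ r : Fin d, ∑ a : Fin d, ∑ a' : Fin d,
            w x ((a, a'), (b1, r)) * (starRingEnd ℂ) (w x ((a, a'), (b2, r))) := by
      rw [ptraceSnd]
      simp only [Matrix.of_apply]
      refine Finset.sum_congr rfl fun r _ => ?_
      rw [ptraceFst]
      simp only [Matrix.of_apply, Fintype.sum_prod_type]
      rfl
    rw [h0]
    have hterm : ∀ a a' r : Fin d,
        w x ((a, a'), (b1, r)) * (starRingEnd ℂ) (w x ((a, a'), (b2, r)))
          = (((d : ℂ)⁻¹ * (d : ℂ)⁻¹ * (d : ℂ)⁻¹)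
              * ((starRingEnd ℂ) (W x r b1) * W x r b2) * ((g b1 : ℂ) * (g b2 : ℂ)))
              * ((starRingEnd ℂ) (W x a' a) * W x a' a) := by
      intro a a' r
      rw [hwval, hwval]
      simp only [_root_.map_mul, map_inv₀, Complex.conj_ofReal, Complex.conj_conj,
        Complex.conj_natCast]
      linear_combination ((d:ℂ)⁻¹ * (d:ℂ)⁻¹ * ((starRingEnd ℂ) (W x r b1) * W x r b2)
        * ((g b1 : ℂ) * (g b2 : ℂ)) * ((starRingEnd ℂ) (W x a' a) * W x a' a)) * hsd
    have e1 : ∀ r : Fin d,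
        (∑ a : Fin d, ∑ a' : Fin d,
          w x ((a, a'), (b1, r)) * (starRingEnd ℂ) (w x ((a, a'), (b2, r))))
          = (((d : ℂ)⁻¹ * (d : ℂ)⁻¹ * (d : ℂ)⁻¹)
              * ((starRingEnd ℂ) (W x r b1) * W x r b2) * ((g b1 : ℂ) * (g b2 : ℂ))) * (d : ℂ) := by
      intro r
      rw [Finset.sum_congr rfl (fun a _ => Finset.sum_congr rfl (fun a' _ => hterm a a' r))]
      rw [← hWrow x, Finset.mul_sum]
      exact Finset.sum_congr rfl fun a _ => by rw [Finset.mul_sum]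
    rw [Finset.sum_congr rfl (fun r _ => e1 r)]
    have e2 : (∑ r : Fin d, (((d : ℂ)⁻¹ * (d : ℂ)⁻¹ * (d : ℂ)⁻¹)
              * ((starRingEnd ℂ) (W x r b1) * W x r b2) * ((g b1 : ℂ) * (g b2 : ℂ))) * (d : ℂ))
        = (((d : ℂ)⁻¹ * (d : ℂ)⁻¹ * (d : ℂ)⁻¹) * ((g b1 : ℂ) * (g b2 : ℂ)) * (d : ℂ))
            * ∑ r, (starRingEnd ℂ) (W x r b1) * W x r b2 := by
      rw [Finset.mul_sum]
      exact Finset.sum_congr rfl fun r _ => by ring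
    rw [e2, hWcol x b1 b2]
    rcases eq_or_ne b1 b2 with h | h
    · subst h
      rw [if_pos rfl, mul_one, Matrix.diagonal_apply_eq]
      push_cast
      field_simp
      try ring
    · rw [if_neg h, mul_zero, Matrix.diagonal_apply_ne _ h]
  have claim2 : ∀ x, ρ x = gibbs β Ham := by
    intro x
    rw [hρ, claim1, hρentry, hgibbs]
    ext i j
    rcases eq_or_ne i j with h | h
    · subst h
      simp only [Matrix.smul_apply, Matrix.diagonal_apply_eq, smul_eq_mul]
      rw [← Complex.ofReal_mul, hgsq]
      rw [← Complex.ofReal_inv, ← Complex.ofReal_mul, ← Complex.ofReal_mul]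
      congr 1
      have h2 : ((d:ℝ)^2)⁻¹ ≠ 0 := by positivity
      field_simp
      try ring
    · simp [Matrix.diagonal_apply_ne _ h, h]
  refine ⟨claim1, claim2, ?_⟩
  -- energy term vanishes
  have hE : ∀ x : Fin d × Fin d,
      ((Ham * (ρ x - (1 : Matrix (Fin d) (Fin d) ℂ) * ρ x *
        star (1 : Matrix (Fin d) (Fin d) ℂ))).trace).re = 0 := by
    intro x
    have h1 : ρ x - (1 : Matrix (Fin d) (Fin d) ℂ) * ρ x *
        star (1 : Matrix (Fin d) (Fin d) ℂ) = 0 := by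
      rw [star_one, one_mul, mul_one, sub_self]
    rw [h1, mul_zero, Matrix.trace_zero]
    simp
  have hcard : (Finset.univ : Finset (Fin d × Fin d)).card = d ^ 2 := by
    simp [Finset.card_univ, sq]
  calc (∑ x, p x * vnEntropy (ρ x)
      + β * ∑ x, p x *
          ((Ham * (ρ x - (1 : Matrix (Fin d) (Fin d) ℂ) * ρ x *
            star (1 : Matrix (Fin d) (Fin d) ℂ))).trace).re)
      = (∑ x : Fin d × Fin d, ((d : ℝ) ^ 2)⁻¹ * vnEntropy (gibbs β Ham)) + β * ∑ x : Fin d × Fin d, (0:ℝ) := by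
        congr 1
        · exact Finset.sum_congr rfl fun x _ => by rw [claim1, claim2]
        · congr 1
          exact Finset.sum_congr rfl fun x _ => by rw [hE, mul_zero]
    _ = vnEntropy (gibbs β Ham) := by
        rw [Finset.sum_const, hcard, Finset.sum_const]
        simp only [smul_zero, mul_zero, add_zero, nsmul_eq_mul]
        rw [← mul_assoc]
        push_cast
        rw [mul_inv_cancel₀ (by positivity), one_mul]


end
end

section
/- (Passivity of Gibbs states) Let H be a Hermitian operator on a finite-dimensional Hilbert space and β > 0. The Gibbs state τ_β = e^{-βH}/Tr e^{-βH} is passive: for every unitary U, Tr(H U τ_β U†) ≥ Tr(H τ_β). -/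
open Matrix BigOperators Finset
open scoped Kronecker ComplexOrder

noncomputable section

variable {n : Type*} [Fintype n] [DecidableEq n]

/-- passivity of Gibbs states: no unitary can extract energy
from `τ_β`. -/
theorem gibbs_passive {d : ℕ}
    (H : Matrix (Fin d) (Fin d) ℂ) (hH : H.IsHermitian) (β : ℝ) (hβ : 0 < β)
    (U : Matrix (Fin d) (Fin d) ℂ) (hU : IsUnitaryMat U) :
    ((H * gibbs β H).trace).re ≤ ((H * (U * gibbs β H * star U)).trace).re := by
  classical
  rcases Nat.eq_zero_or_pos d with hd | hd
  · subst hd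
    simp [Matrix.trace]
  set V : Matrix (Fin d) (Fin d) ℂ := (hH.eigenvectorUnitary : Matrix (Fin d) (Fin d) ℂ)
    with hVdef
  set lam : Fin d → ℝ := hH.eigenvalues with hlamdef
  set e : Fin d → ℝ := fun i => Real.exp (-(β * lam i)) with hedef
  have hV1 : star V * V = 1 := Matrix.mem_unitaryGroup_iff'.mp hH.eigenvectorUnitary.2
  have hV2 : V * star V = 1 := Matrix.mem_unitaryGroup_iff.mp hH.eigenvectorUnitary.2
  have hU1 : U * star U = 1 := Matrix.mem_unitaryGroup_iff.mp hU
  have hU2 : star U * U = 1 := Matrix.mem_unitaryGroup_iff'.mp hU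
  have cV1 : ∀ X : Matrix (Fin d) (Fin d) ℂ, V * (star V * X) = X := fun X => by
    rw [← Matrix.mul_assoc, hV2, Matrix.one_mul]
  have cV2 : ∀ X : Matrix (Fin d) (Fin d) ℂ, star V * (V * X) = X := fun X => by
    rw [← Matrix.mul_assoc, hV1, Matrix.one_mul]
  have cU1 : ∀ X : Matrix (Fin d) (Fin d) ℂ, U * (star U * X) = X := fun X => by
    rw [← Matrix.mul_assoc, hU1, Matrix.one_mul]
  have cU2 : ∀ X : Matrix (Fin d) (Fin d) ℂ, star U * (U * X) = X := fun X => by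
    rw [← Matrix.mul_assoc, hU2, Matrix.one_mul]
  set Dl : Matrix (Fin d) (Fin d) ℂ := Matrix.diagonal (fun i => (lam i : ℂ)) with hDl
  set De : Matrix (Fin d) (Fin d) ℂ := Matrix.diagonal (fun i => (e i : ℂ)) with hDe
  have hspec : H = V * Dl * star V := hH.spectral_theorem
  have hE : matFun (fun x => Real.exp (-(β * x))) H = V * De * star V := by
    rw [matFun, dif_pos hH]
  set W : Matrix (Fin d) (Fin d) ℂ := star V * U * V with hWdef
  have hWs : star W = star V * star U * V := by
    rw [hWdef]
    simp only [Matrix.star_mul, star_star, Matrix.mul_assoc]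
  have hW1 : W * star W = 1 := by
    rw [hWdef, hWs]
    simp [Matrix.mul_assoc, cV1, cU1, hV1]
  have hW2 : star W * W = 1 := by
    rw [hWdef, hWs]
    simp [Matrix.mul_assoc, cV1, cU2, hV1]
  set B : Fin d → Fin d → ℝ := fun i j => Complex.normSq (W i j) with hBdef
  have hBnn : ∀ i j, 0 ≤ B i j := fun i j => Complex.normSq_nonneg _
  -- row and column sums of B are 1
  have hrow : ∀ i, ∑ j, B i j = 1 := by
    intro i
    have h := congrArg (fun M : Matrix (Fin d) (Fin d) ℂ => M i i) hW1
    simp only [Matrix.mul_apply, Matrix.conjTranspose_apply, Matrix.one_apply_eq] at h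
    have h2 : (∑ j, ((B i j : ℝ) : ℂ)) = 1 := by
      rw [← h]
      exact Finset.sum_congr rfl fun j _ => by
        rw [hBdef, ← Complex.mul_conj]; rfl
    exact_mod_cast h2
  have hcol : ∀ j, ∑ i, B i j = 1 := by
    intro j
    have h := congrArg (fun M : Matrix (Fin d) (Fin d) ℂ => M j j) hW2
    simp only [Matrix.mul_apply, Matrix.conjTranspose_apply, Matrix.one_apply_eq] at h
    have h2 : (∑ i, ((B i j : ℝ) : ℂ)) = 1 := by
      rw [← h]
      exact Finset.sum_congr rfl fun i _ => by
        rw [hBdef, ← Complex.mul_conj, mul_comm]; rfl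
    exact_mod_cast h2
  -- trace under conjugation
  have trace_conj : ∀ A : Matrix (Fin d) (Fin d) ℂ, (V * A * star V).trace = A.trace := by
    intro A
    rw [Matrix.trace_mul_comm, ← Matrix.mul_assoc, hV1, Matrix.one_mul]
  -- partition function
  have hZ : gibbsZ β H = ∑ i, e i := by
    rw [gibbsZ, hE, trace_conj, hDe, Matrix.trace_diagonal]
    have : (∑ i, ((e i : ℝ) : ℂ)) = ((∑ i, e i : ℝ) : ℂ) := by push_cast; rfl
    rw [this, Complex.ofReal_re]
  -- LHS trace
  have hHE : H * (V * De * star V) = V * (Dl * De) * star V := by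
    rw [hspec]
    simp [Matrix.mul_assoc, cV2]
  have hLHS : ((H * gibbs β H).trace).re = (∑ i, e i)⁻¹ * ∑ i, lam i * e i := by
    rw [gibbs, hE, Matrix.mul_smul, Matrix.trace_smul, hHE, trace_conj, hZ]
    rw [hDl, hDe, Matrix.diagonal_mul_diagonal, Matrix.trace_diagonal]
    have h1 : ((∑ i, e i : ℝ) : ℂ)⁻¹ = (((∑ i, e i)⁻¹ : ℝ) : ℂ) := by push_cast; rfl
    have h2 : (∑ i, ((lam i : ℂ) * (e i : ℂ))) = ((∑ i, lam i * e i : ℝ) : ℂ) := by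
      push_cast; rfl
    rw [smul_eq_mul, h1, h2, ← Complex.ofReal_mul, Complex.ofReal_re]
  -- RHS trace
  have hRHSmat : H * (U * (V * De * star V) * star U)
      = V * (Dl * (W * (De * star W))) * star V := by
    rw [hspec, hWdef, hWs]
    simp [Matrix.mul_assoc, cV2, hV2]
  have hterm : ∀ (z : ℂ) (r : ℝ), z * ((r : ℂ) * (starRingEnd ℂ) z)
      = ((r * Complex.normSq z : ℝ) : ℂ) := by
    intro z r
    rw [show z * ((r : ℂ) * (starRingEnd ℂ) z) = (r : ℂ) * (z * (starRingEnd ℂ) z) from by ring,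
      Complex.mul_conj]
    push_cast; ring
  have hTr2 : (Dl * (W * (De * star W))).trace
      = ((∑ i, ∑ j, lam i * (e j * B i j) : ℝ) : ℂ) := by
    rw [Matrix.trace]
    have hdiag : ∀ i, (Dl * (W * (De * star W))).diag i
        = ∑ j, ((lam i * (e j * B i j) : ℝ) : ℂ) := by
      intro i
      rw [Matrix.diag_apply, hDl, Matrix.diagonal_mul, Matrix.mul_apply, Finset.mul_sum]
      refine Finset.sum_congr rfl fun j _ => ?_
      have h1 : (De * star W) j i = (e j : ℂ) * (starRingEnd ℂ) (W i j) := by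
        simp [hDe, Matrix.diagonal_mul, Matrix.conjTranspose_apply]
      rw [h1, hterm]
      push_cast; ring
    rw [Finset.sum_congr rfl fun i _ => hdiag i]
    push_cast; rfl
  have hRHS : ((H * (U * gibbs β H * star U)).trace).re
      = (∑ i, e i)⁻¹ * ∑ i, ∑ j, lam i * (e j * B i j) := by
    rw [gibbs, hE]
    have hmv : U * ((gibbsZ β H : ℂ)⁻¹ • (V * De * star V)) * star U
        = (gibbsZ β H : ℂ)⁻¹ • (U * (V * De * star V) * star U) := by
      rw [Matrix.mul_smul, Matrix.smul_mul]
    rw [hmv, Matrix.mul_smul, Matrix.trace_smul, hRHSmat, trace_conj, hTr2, hZ]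
    rw [smul_eq_mul,
      show ((∑ i, e i : ℝ) : ℂ)⁻¹ = (((∑ i, e i)⁻¹ : ℝ) : ℂ) from by push_cast; rfl,
      ← Complex.ofReal_mul, Complex.ofReal_re]
  rw [hLHS, hRHS]
  have hS : 0 < ∑ i, e i := by
    have : Nonempty (Fin d) := Fin.pos_iff_nonempty.mp hd
    exact Finset.sum_pos (fun i _ => Real.exp_pos _) Finset.univ_nonempty
  have key : ∀ i j, (e j - e i) / β ≤ lam i * e j - lam j * e j := by
    intro i j
    have hej : (0 : ℝ) < e j := Real.exp_pos _
    have hx := Real.add_one_le_exp (β * (lam j - lam i))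
    have hei : e i = e j * Real.exp (β * (lam j - lam i)) := by
      rw [hedef]
      dsimp only
      rw [← Real.exp_add]
      congr 1
      ring
    have hkey := mul_le_mul_of_nonneg_left hx hej.le
    rw [← hei] at hkey
    rw [div_le_iff₀ hβ]
    nlinarith [hkey]
  have h1 : ∑ i, ∑ j, B i j * e j = ∑ j, e j := by
    rw [Finset.sum_comm]
    exact Finset.sum_congr rfl fun j _ => by rw [← Finset.sum_mul, hcol, one_mul]
  have h2 : ∑ i, ∑ j, B i j * e i = ∑ i, e i := by
    refine Finset.sum_congr rfl fun i _ => ?_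
    rw [← Finset.sum_mul, hrow, one_mul]
  have hzero : ∑ i, ∑ j, B i j * ((e j - e i) / β) = 0 := by
    calc ∑ i, ∑ j, B i j * ((e j - e i) / β)
        = (∑ i, ∑ j, B i j * e j) / β - (∑ i, ∑ j, B i j * e i) / β := by
          rw [Finset.sum_div, Finset.sum_div, ← Finset.sum_sub_distrib]
          refine Finset.sum_congr rfl fun i _ => ?_
          rw [Finset.sum_div, Finset.sum_div, ← Finset.sum_sub_distrib]
          exact Finset.sum_congr rfl fun j _ => by ring
      _ = 0 := by rw [h1, h2]; simp
  have hmono : ∑ i, ∑ j, B i j * ((e j - e i) / β)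
      ≤ ∑ i, ∑ j, B i j * (lam i * e j - lam j * e j) :=
    Finset.sum_le_sum fun i _ => Finset.sum_le_sum fun j _ =>
      mul_le_mul_of_nonneg_left (key i j) (hBnn i j)
  have hL : ∑ i, lam i * e i = ∑ i, ∑ j, B i j * (lam j * e j) := by
    symm
    rw [Finset.sum_comm]
    refine Finset.sum_congr rfl fun j _ => ?_
    rw [← Finset.sum_mul, hcol, one_mul]
  have hsplit : ∑ i, ∑ j, B i j * (lam i * e j - lam j * e j)
      = (∑ i, ∑ j, B i j * (lam i * e j)) - ∑ i, ∑ j, B i j * (lam j * e j) := by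
    rw [← Finset.sum_sub_distrib]
    refine Finset.sum_congr rfl fun i _ => ?_
    rw [← Finset.sum_sub_distrib]
    exact Finset.sum_congr rfl fun j _ => by ring
  have hfin : ∑ i, ∑ j, lam i * (e j * B i j) = ∑ i, ∑ j, B i j * (lam i * e j) :=
    Finset.sum_congr rfl fun i _ => Finset.sum_congr rfl fun j _ => by ring
  rw [hL, hfin]
  have hcore : ∑ i, ∑ j, B i j * (lam j * e j) ≤ ∑ i, ∑ j, B i j * (lam i * e j) := by
    linarith [hmono, hzero, hsplit]
  exact mul_le_mul_of_nonneg_left hcore (inv_nonneg.mpr hS.le)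

end
end

section
/- (Complete passivity of Gibbs states) Let H be Hermitian on a finite-dimensional space, β > 0, and τ_β = e^{-βH}/Z. For every n ≥ 1 and every unitary U on the n-fold tensor product, Tr(H_n U τ_β^{⊗n} U†) ≥ Tr(H_n τ_β^{⊗n}), where H_n = Σ_{i=1}^n H^{(i)} is the sum of single-copy Hamiltonians. -/
open Matrix BigOperators Finset
open scoped Kronecker ComplexOrder

noncomputable section

lemma sum_pi_prod {m d : ℕ} (F : Fin m → Fin d → ℂ) :
    ∑ h : Fin m → Fin d, ∏ i, F i (h i) = ∏ i, ∑ x, F i x := by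
  rw [Finset.prod_univ_sum, Fintype.piFinset_univ]

lemma conj_diag_apply_s18 {k : Type*} [Fintype k] [DecidableEq k]
    (V : Matrix k k ℂ) (c : k → ℂ) (a b : k) :
    (V * Matrix.diagonal c * star V) a b = ∑ x, c x * (V a x * (starRingEnd ℂ) (V b x)) := by
  rw [Matrix.mul_assoc]
  simp only [Matrix.mul_apply, Matrix.diagonal_apply, Matrix.star_apply, Complex.star_def,
    ite_mul, zero_mul, Finset.sum_ite_eq, Finset.mem_univ, if_true]
  exact Finset.sum_congr rfl fun x _ => by ring

lemma sum_mul_conj {k : Type*} [Fintype k] [DecidableEq k]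
    {V : Matrix k k ℂ} (hV : V * star V = 1) (a b : k) :
    ∑ x, V a x * (starRingEnd ℂ) (V b x) = if a = b then 1 else 0 := by
  have := congrFun (congrFun hV a) b
  simpa [Matrix.mul_apply, Matrix.star_apply, Matrix.one_apply, Complex.star_def] using this

lemma sum_conj_mul {k : Type*} [Fintype k] [DecidableEq k]
    {V : Matrix k k ℂ} (hV : star V * V = 1) (a b : k) :
    ∑ x, (starRingEnd ℂ) (V x a) * V x b = if a = b then 1 else 0 := by
  have := congrFun (congrFun hV a) b
  simpa [Matrix.mul_apply, Matrix.star_apply, Matrix.one_apply, Complex.star_def] using this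

lemma prod_ite_one_zero {m : ℕ} {κ : Type*} [DecidableEq κ] (f g : Fin m → κ) :
    (∏ i, if f i = g i then (1:ℂ) else 0) = if f = g then 1 else 0 := by
  by_cases h : f = g
  · simp [h]
  · rw [if_neg h]
    obtain ⟨i, hi⟩ := Function.ne_iff.mp h
    exact Finset.prod_eq_zero (Finset.mem_univ i) (by simp [hi])

lemma trace_diagonal_mul_s18 {k : Type*} [Fintype k] [DecidableEq k] (c : k → ℂ) (X : Matrix k k ℂ) :
    (Matrix.diagonal c * X).trace = ∑ f, c f * X f f := by
  simp [Matrix.trace, Matrix.diag, Matrix.mul_apply, Matrix.diagonal_apply, ite_mul, zero_mul,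
    Finset.sum_ite_eq, Finset.mem_univ]

lemma scalar_key {β a b C : ℝ} (hβ : 0 < β) (hC : 0 ≤ C) :
    b * (C * Real.exp (-(β * b))) + (C * Real.exp (-(β * b)) - C * Real.exp (-(β * a))) / β
      ≤ a * (C * Real.exp (-(β * b))) := by
  have h1 : -(β * (a - b)) + 1 ≤ Real.exp (-(β * (a - b))) := Real.add_one_le_exp _
  have h2 : Real.exp (-(β * a)) = Real.exp (-(β * b)) * Real.exp (-(β * (a - b))) := by
    rw [← Real.exp_add]; ring_nf
  have h3 : 0 < Real.exp (-(β * b)) := Real.exp_pos _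
  rw [← sub_nonneg]
  have key : 0 ≤ C * Real.exp (-(β * b)) * (β * (a - b) + Real.exp (-(β * (a - b))) - 1) := by
    apply mul_nonneg (mul_nonneg hC h3.le); nlinarith
  have hβ' : (0:ℝ) < β⁻¹ := by positivity
  calc (0:ℝ) ≤ β⁻¹ * (C * Real.exp (-(β * b)) * (β * (a - b) + Real.exp (-(β * (a - b))) - 1)) :=
        mul_nonneg hβ'.le key
    _ = a * (C * Real.exp (-(β * b))) - (b * (C * Real.exp (-(β * b)))
          + (C * Real.exp (-(β * b)) - C * Real.exp (-(β * a))) / β) := by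
        rw [h2]; field_simp; ring

variable {n : Type*} [Fintype n] [DecidableEq n]

/-- complete passivity of Gibbs states: for every `n` and every
unitary on the `n`-fold tensor product, no energy can be extracted from
`τ_β^{⊗n}` with respect to `H_n = Σᵢ H⁽ⁱ⁾`. -/
theorem gibbs_completely_passive {d : ℕ}
    (H : Matrix (Fin d) (Fin d) ℂ) (hH : H.IsHermitian) (β : ℝ) (hβ : 0 < β)
    (m : ℕ) (hm : 1 ≤ m)
    (Hn : Matrix (Fin m → Fin d) (Fin m → Fin d) ℂ)
    (hHn : Hn = ∑ i : Fin m, Matrix.of fun f g =>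
      H (f i) (g i) * ∏ j ∈ Finset.univ.erase i, (if f j = g j then (1:ℂ) else 0))
    (τn : Matrix (Fin m → Fin d) (Fin m → Fin d) ℂ)
    (hτn : τn = Matrix.of fun f g => ∏ i, gibbs β H (f i) (g i))
    (U : Matrix (Fin m → Fin d) (Fin m → Fin d) ℂ)
    (hU : U ∈ Matrix.unitaryGroup (Fin m → Fin d) ℂ) :
    ((Hn * τn).trace).re ≤ ((Hn * (U * τn * star U)).trace).re := by
  rcases Nat.eq_zero_or_pos d with hd | hd
  · subst hd
    haveI : IsEmpty (Fin m → Fin 0) := ⟨fun f => (f ⟨0, hm⟩).elim0⟩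
    simp [Matrix.trace]
  haveI : NeZero d := ⟨hd.ne'⟩
  set lam : Fin d → ℝ := hH.eigenvalues with hlam
  set V : Matrix (Fin d) (Fin d) ℂ := (hH.eigenvectorUnitary : Matrix (Fin d) (Fin d) ℂ)
    with hVdef
  have hVmem : V ∈ Matrix.unitaryGroup (Fin d) ℂ := hH.eigenvectorUnitary.2
  have hV1 : star V * V = 1 := (Unitary.mem_iff.mp hVmem).1
  have hV2 : V * star V = 1 := (Unitary.mem_iff.mp hVmem).2
  have hspec : ∀ a b, H a b = ∑ x, (lam x : ℂ) * (V a x * (starRingEnd ℂ) (V b x)) := by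
    intro a b
    conv_lhs => rw [hH.spectral_theorem, Unitary.conjStarAlgAut_apply]
    rw [conj_diag_apply_s18]
    rfl
  set Z : ℝ := ∑ x, Real.exp (-(β * lam x)) with hZ
  have hZpos : 0 < Z := Finset.sum_pos (fun x _ => Real.exp_pos _) Finset.univ_nonempty
  have hgZ : gibbsZ β H = Z := by
    unfold gibbsZ matFun
    rw [dif_pos hH, Matrix.trace_mul_cycle, hV1, Matrix.one_mul, Matrix.trace_diagonal,
      Complex.re_sum]
    simp only [Complex.ofReal_re]
    rfl
  set p : Fin d → ℝ := fun x => Real.exp (-(β * lam x)) / Z with hp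
  have hgibbs : ∀ a b, gibbs β H a b = ∑ x, (p x : ℂ) * (V a x * (starRingEnd ℂ) (V b x)) := by
    intro a b
    unfold gibbs matFun
    rw [dif_pos hH, hgZ]
    simp only [Matrix.smul_apply, conj_diag_apply_s18, smul_eq_mul, Finset.mul_sum]
    refine Finset.sum_congr rfl fun x _ => ?_
    have hZ0 : (Z:ℂ) ≠ 0 := by exact_mod_cast hZpos.ne'
    rw [hp]
    push_cast
    field_simp
    rfl
  set W : Matrix (Fin m → Fin d) (Fin m → Fin d) ℂ :=
    Matrix.of (fun f g => ∏ i, V (f i) (g i)) with hWdef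
  have hWapp : ∀ f g, W f g = ∏ i, V (f i) (g i) := fun f g => rfl
  have hW1 : star W * W = 1 := by
    ext f g
    simp only [Matrix.mul_apply, Matrix.star_apply, hWapp, Complex.star_def, map_prod]
    have : ∀ h : Fin m → Fin d,
        (∏ i, (starRingEnd ℂ) (V (h i) (f i))) * ∏ i, V (h i) (g i)
          = ∏ i, ((starRingEnd ℂ) (V (h i) (f i)) * V (h i) (g i)) := by
      intro h; rw [Finset.prod_mul_distrib]
    rw [Finset.sum_congr rfl fun h _ => this h,
      sum_pi_prod (fun i x => (starRingEnd ℂ) (V x (f i)) * V x (g i))]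
    simp_rw [sum_conj_mul hV1]
    rw [prod_ite_one_zero, Matrix.one_apply]
  have hW2 : W * star W = 1 := by
    ext f g
    simp only [Matrix.mul_apply, Matrix.star_apply, hWapp, Complex.star_def, map_prod]
    have : ∀ h : Fin m → Fin d,
        (∏ i, V (f i) (h i)) * ∏ i, (starRingEnd ℂ) (V (g i) (h i))
          = ∏ i, (V (f i) (h i) * (starRingEnd ℂ) (V (g i) (h i))) := by
      intro h; rw [Finset.prod_mul_distrib]
    rw [Finset.sum_congr rfl fun h _ => this h,
      sum_pi_prod (fun i x => V (f i) x * (starRingEnd ℂ) (V (g i) x))]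
    simp_rw [sum_mul_conj hV2]
    rw [prod_ite_one_zero, Matrix.one_apply]
  have hWmem : W ∈ Matrix.unitaryGroup (Fin m → Fin d) ℂ := Unitary.mem_iff.mpr ⟨hW1, hW2⟩
  set Lam : (Fin m → Fin d) → ℝ := fun f => ∑ i, lam (f i) with hLam
  set q : (Fin m → Fin d) → ℝ := fun f => ∏ i, p (f i) with hq
  -- τn diagonalized
  have hτ : τn = W * Matrix.diagonal (fun f => (q f : ℂ)) * star W := by
    rw [hτn]; ext f g
    rw [conj_diag_apply_s18]
    have : ∀ h : Fin m → Fin d,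
        ((q h : ℝ) : ℂ) * (W f h * (starRingEnd ℂ) (W g h))
          = ∏ i, ((p (h i) : ℂ) * (V (f i) (h i) * (starRingEnd ℂ) (V (g i) (h i)))) := by
      intro h
      rw [hWapp, hWapp, map_prod, hq]
      push_cast
      rw [← Finset.prod_mul_distrib, ← Finset.prod_mul_distrib]
    rw [Finset.sum_congr rfl fun h _ => this h,
      sum_pi_prod (fun i x => (p x : ℂ) * (V (f i) x * (starRingEnd ℂ) (V (g i) x)))]
    simp only [Matrix.of_apply]
    exact Finset.prod_congr rfl fun i _ => hgibbs (f i) (g i)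
  -- Hn diagonalized
  have hHd : Hn = W * Matrix.diagonal (fun f => (Lam f : ℂ)) * star W := by
    have step : ∀ i : Fin m,
        (Matrix.of fun f g : Fin m → Fin d =>
            H (f i) (g i) * ∏ j ∈ Finset.univ.erase i, (if f j = g j then (1:ℂ) else 0))
          = W * Matrix.diagonal (fun f => ((lam (f i) : ℝ) : ℂ)) * star W := by
      intro i; ext f g
      rw [conj_diag_apply_s18]
      have e1 : ∀ h : Fin m → Fin d,
          ((lam (h i) : ℝ) : ℂ) * (W f h * (starRingEnd ℂ) (W g h))
            = ∏ j, ((if j = i then ((lam (h j) : ℝ) : ℂ) else 1)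
                * (V (f j) (h j) * (starRingEnd ℂ) (V (g j) (h j)))) := by
        intro h
        rw [hWapp, hWapp, map_prod, Finset.prod_mul_distrib,
          Finset.prod_ite_eq' Finset.univ i (fun j => ((lam (h j) : ℝ) : ℂ))]
        simp only [Finset.mem_univ, if_true]
        rw [← Finset.prod_mul_distrib]
      rw [Finset.sum_congr rfl fun h _ => e1 h,
        sum_pi_prod (fun j x => (if j = i then ((lam x : ℝ) : ℂ) else 1)
          * (V (f j) x * (starRingEnd ℂ) (V (g j) x)))]
      have e2 : ∀ j : Fin m,
          (∑ x, (if j = i then ((lam x : ℝ) : ℂ) else 1)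
              * (V (f j) x * (starRingEnd ℂ) (V (g j) x)))
            = if j = i then H (f j) (g j) else (if f j = g j then 1 else 0) := by
        intro j
        by_cases hji : j = i
        · subst hji
          simp only [if_pos rfl]
          exact (hspec (f j) (g j)).symm
        · simp only [if_neg hji]
          rw [← sum_mul_conj hV2 (f j) (g j)]
          exact Finset.sum_congr rfl fun x _ => one_mul _
      rw [Finset.prod_congr rfl fun j _ => e2 j, ← Finset.mul_prod_erase Finset.univ _
        (Finset.mem_univ i)]
      simp only [if_pos rfl, Matrix.of_apply]
      congr 1
      exact Finset.prod_congr rfl fun j hj => by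
        rw [if_neg (Finset.mem_erase.mp hj).1]
    have dsum : (∑ i : Fin m, Matrix.diagonal (fun f : Fin m → Fin d => ((lam (f i):ℝ):ℂ)))
        = Matrix.diagonal (fun f => ((Lam f : ℝ) : ℂ)) := by
      ext f g
      simp only [Matrix.sum_apply, Matrix.diagonal_apply]
      by_cases hfg : f = g
      · subst hfg
        simp only [if_pos rfl, hLam]
        push_cast
        rfl
      · simp [hfg]
    rw [hHn, Finset.sum_congr rfl fun i _ => step i, ← Finset.sum_mul, ← Finset.mul_sum, dsum]
  -- abbreviations for the diagonal matrices
  set D1 : Matrix (Fin m → Fin d) (Fin m → Fin d) ℂ :=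
    Matrix.diagonal (fun f => ((Lam f : ℝ) : ℂ)) with hD1
  set D2 : Matrix (Fin m → Fin d) (Fin m → Fin d) ℂ :=
    Matrix.diagonal (fun f => ((q f : ℝ) : ℂ)) with hD2
  have htr : ∀ A : Matrix (Fin m → Fin d) (Fin m → Fin d) ℂ,
      (W * A * star W).trace = A.trace := by
    intro A
    rw [Matrix.trace_mul_cycle, hW1, Matrix.one_mul]
  -- the unitary in the diagonal basis
  set M : Matrix (Fin m → Fin d) (Fin m → Fin d) ℂ := star W * U * W with hM
  have hMmem : M ∈ Matrix.unitaryGroup (Fin m → Fin d) ℂ :=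
    mul_mem (mul_mem (Unitary.star_mem hWmem) hU) hWmem
  have hM1 : star M * M = 1 := (Unitary.mem_iff.mp hMmem).1
  have hM2 : M * star M = 1 := (Unitary.mem_iff.mp hMmem).2
  -- LHS trace
  have hL : (Hn * τn).trace = ∑ f, ((Lam f : ℝ) : ℂ) * ((q f : ℝ) : ℂ) := by
    rw [hHd, hτ]
    have : (W * D1 * star W) * (W * D2 * star W) = W * (D1 * D2) * star W := by
      simp only [Matrix.mul_assoc]
      rw [show star W * (W * (D2 * star W)) = D2 * star W by
        rw [← Matrix.mul_assoc, hW1, Matrix.one_mul]]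
    rw [this, htr, hD1, hD2, Matrix.diagonal_mul_diagonal, Matrix.trace_diagonal]
  -- RHS trace
  have hRmat : Hn * (U * τn * star U) = W * (D1 * (M * D2 * star M)) * star W := by
    rw [hHd, hτ, hM]
    have hsM : star (star W * U * W) = star W * star U * W := by
      simp [Matrix.star_mul, star_star, Matrix.mul_assoc]
    rw [hsM]
    simp only [Matrix.mul_assoc]
    rw [show W * star W = (1 : Matrix (Fin m → Fin d) (Fin m → Fin d) ℂ) from hW2]
    simp [Matrix.mul_assoc]
  have hR : (Hn * (U * τn * star U)).trace
      = ∑ f, ∑ g, ((Lam f : ℝ) : ℂ) * (((q g : ℝ) : ℂ) * (M f g * (starRingEnd ℂ) (M f g))) := by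
    rw [hRmat, htr, hD1, trace_diagonal_mul_s18]
    refine Finset.sum_congr rfl fun f _ => ?_
    rw [hD2, conj_diag_apply_s18 M _ f f, Finset.mul_sum]
  -- pass to real parts
  set sm : (Fin m → Fin d) → (Fin m → Fin d) → ℝ := fun f g => Complex.normSq (M f g) with hsm
  have hLre : ((Hn * τn).trace).re = ∑ f, Lam f * q f := by
    rw [hL, Complex.re_sum]
    refine Finset.sum_congr rfl fun f _ => ?_
    rw [← Complex.ofReal_mul, Complex.ofReal_re]
  have hRre : ((Hn * (U * τn * star U)).trace).re = ∑ f, ∑ g, Lam f * (q g * sm f g) := by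
    rw [hR, Complex.re_sum]
    refine Finset.sum_congr rfl fun f _ => ?_
    rw [Complex.re_sum]
    refine Finset.sum_congr rfl fun g _ => ?_
    rw [Complex.mul_conj, ← Complex.ofReal_mul, ← Complex.ofReal_mul, Complex.ofReal_re]
  -- doubly stochastic facts
  have hrow : ∀ f, ∑ g, sm f g = 1 := by
    intro f
    have h := sum_mul_conj hM2 f f
    rw [if_pos rfl] at h
    have h2 : ((∑ g, sm f g : ℝ) : ℂ) = 1 := by
      push_cast
      rw [← h]
      exact Finset.sum_congr rfl fun g _ => (Complex.mul_conj _).symm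
    exact_mod_cast h2
  have hcol : ∀ g, ∑ f, sm f g = 1 := by
    intro g
    have h := sum_conj_mul hM1 g g
    rw [if_pos rfl] at h
    have h2 : ((∑ f, sm f g : ℝ) : ℂ) = 1 := by
      push_cast
      rw [← h]
      refine Finset.sum_congr rfl fun f _ => ?_
      rw [mul_comm, Complex.mul_conj]
    exact_mod_cast h2
  have hsnn : ∀ f g, (0:ℝ) ≤ sm f g := fun f g => Complex.normSq_nonneg _
  -- q as Gibbs weights of Lam
  have hqC : ∀ f, q f = (Z⁻¹)^m * Real.exp (-(β * Lam f)) := by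
    intro f
    rw [hq]
    simp only [hp]
    rw [Finset.prod_div_distrib, Finset.prod_const, ← Real.exp_sum]
    have hsum : ∑ i : Fin m, -(β * lam (f i)) = -(β * Lam f) := by
      rw [hLam]
      simp [Finset.mul_sum]
    rw [hsum, Finset.card_univ, Fintype.card_fin, div_eq_mul_inv, mul_comm, inv_pow]
  rw [hLre, hRre]
  have key : ∀ f g, Lam g * q g * sm f g + ((q g - q f) / β) * sm f g
      ≤ Lam f * (q g * sm f g) := by
    intro f g
    have hC : (0:ℝ) ≤ (Z⁻¹)^m := pow_nonneg (inv_nonneg.mpr hZpos.le) m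
    have inner : Lam g * q g + (q g - q f) / β ≤ Lam f * q g := by
      rw [hqC f, hqC g]
      exact scalar_key hβ hC
    calc Lam g * q g * sm f g + ((q g - q f) / β) * sm f g
        = (Lam g * q g + (q g - q f) / β) * sm f g := by ring
      _ ≤ (Lam f * q g) * sm f g := mul_le_mul_of_nonneg_right inner (hsnn f g)
      _ = Lam f * (q g * sm f g) := by ring
  have e1 : ∑ f, Lam f * q f = ∑ f, ∑ g, Lam g * q g * sm f g := by
    rw [Finset.sum_comm]
    refine Finset.sum_congr rfl fun g _ => ?_
    rw [← Finset.mul_sum, hcol g, mul_one]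
  have e2 : ∑ f, ∑ g, ((q g - q f) / β) * sm f g = 0 := by
    have a1 : ∑ f, ∑ g, (q g / β) * sm f g = ∑ g, q g / β := by
      rw [Finset.sum_comm]
      refine Finset.sum_congr rfl fun g _ => ?_
      rw [← Finset.mul_sum, hcol g, mul_one]
    have a2 : ∑ f, ∑ g, (q f / β) * sm f g = ∑ f, q f / β := by
      refine Finset.sum_congr rfl fun f _ => ?_
      rw [← Finset.mul_sum, hrow f, mul_one]
    calc ∑ f, ∑ g, ((q g - q f) / β) * sm f g
        = ∑ f, ∑ g, ((q g / β) * sm f g - (q f / β) * sm f g) :=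
          Finset.sum_congr rfl fun f _ => Finset.sum_congr rfl fun g _ => by ring
      _ = (∑ f, ∑ g, (q g / β) * sm f g) - ∑ f, ∑ g, (q f / β) * sm f g := by
          simp [Finset.sum_sub_distrib]
      _ = 0 := by rw [a1, a2, sub_self]
  calc ∑ f, Lam f * q f
      = (∑ f, ∑ g, Lam g * q g * sm f g) + ∑ f, ∑ g, ((q g - q f) / β) * sm f g := by
        rw [e2, add_zero]; exact e1
    _ = ∑ f, ∑ g, (Lam g * q g * sm f g + ((q g - q f) / β) * sm f g) := by
        simp only [← Finset.sum_add_distrib]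
    _ ≤ ∑ f, ∑ g, Lam f * (q g * sm f g) :=
        Finset.sum_le_sum fun f _ => Finset.sum_le_sum fun g _ => key f g

end
end
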